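/- arXiv:1406.3781 — 10 statements merged into one kernel-verified Lean document; each statement's English description precedes it below -/
import Mathlib

section
/- Let η > 0, a > 0 and n a positive integer, and define g : [-1,1] → ℝ² by g(x) = (x, exp(η x)). Then the point (-a/n, 1) lies in the convex hull of the image g([-1,1]) if and only if a/n ≤ (exp(η) + exp(-η) - 2)/(exp(η) - exp(-η)) = (cosh(η) - 1)/sinh(η). -/
open Real Set

/-- **Feasible moments.**
For `η > 0`, `a > 0` and a positive integer `n`, with `g x = (x, exp (η x))`,
the point `(-a/n, 1)` lies in the convex hull of `g '' [-1, 1]` if and only if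
`a/n ≤ (exp η + exp (-η) - 2) / (exp η - exp (-η)) = (cosh η - 1) / sinh η`. -/
theorem feasible_moments (η a : ℝ) (hη : 0 < η) (ha : 0 < a) (n : ℕ) (hn : 0 < n) :
    (((-a / n, 1) : ℝ × ℝ) ∈
        convexHull ℝ ((fun x : ℝ => (x, Real.exp (η * x))) '' Set.Icc (-1 : ℝ) 1)
      ↔ a / n ≤ (Real.exp η + Real.exp (-η) - 2) / (Real.exp η - Real.exp (-η)))
    ∧ (Real.exp η + Real.exp (-η) - 2) / (Real.exp η - Real.exp (-η))
        = (Real.cosh η - 1) / Real.sinh η := by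
  have hs : 0 < Real.sinh η := Real.sinh_pos_iff.mpr hη
  have hc1 : 1 < Real.cosh η := Real.one_lt_cosh.mpr hη.ne'
  have heq : (Real.exp η + Real.exp (-η) - 2) / (Real.exp η - Real.exp (-η))
      = (Real.cosh η - 1) / Real.sinh η := by
    have hd : Real.exp η - Real.exp (-η) ≠ 0 := by
      have h2 : Real.exp η - Real.exp (-η) = 2 * Real.sinh η := by rw [Real.sinh_eq]; ring
      rw [h2]; positivity
    rw [Real.cosh_eq, Real.sinh_eq]
    field_simp
  refine ⟨?_, heq⟩
  rw [heq]
  set t : ℝ := a / n with htdef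
  have ht : 0 < t := div_pos ha (by exact_mod_cast hn)
  have hta : (-a / n : ℝ) = -t := by rw [htdef, neg_div]
  have hclt1 : (Real.cosh η - 1) / Real.sinh η < 1 := by
    rw [div_lt_one hs]
    have h2 : Real.cosh η - Real.sinh η = Real.exp (-η) := Real.cosh_sub_sinh η
    have h3 : Real.exp (-η) < 1 := Real.exp_lt_one_iff.mpr (by linarith)
    linarith
  constructor
  · intro hmem
    have hsub : convexHull ℝ ((fun x : ℝ => (x, Real.exp (η * x))) '' Set.Icc (-1 : ℝ) 1)
        ⊆ {p : ℝ × ℝ | p.2 - Real.sinh η * p.1 ≤ Real.cosh η} := by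
      apply convexHull_min
      · rintro p ⟨x, hx, rfl⟩
        have h01 : (0:ℝ) ≤ (1 - x) / 2 := by have := hx.2; linarith
        have h02 : (0:ℝ) ≤ (1 + x) / 2 := by have := hx.1; linarith
        have hcx := convexOn_exp.2 (mem_univ (-η)) (mem_univ η) h01 h02 (by ring)
        simp only [smul_eq_mul] at hcx
        have harg : (1 - x) / 2 * (-η) + (1 + x) / 2 * η = η * x := by ring
        rw [harg] at hcx
        have : Real.exp (η * x) ≤ Real.cosh η + Real.sinh η * x := by
          rw [Real.cosh_eq, Real.sinh_eq]; nlinarith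
        simpa using by linarith
      · exact convex_halfSpace_le
          ⟨fun p q => by simp; ring, fun r p => by simp; ring⟩ _
    have h1 := hsub hmem
    simp only [mem_setOf_eq] at h1
    rw [hta] at h1
    rw [le_div_iff₀ hs]
    nlinarith
  · intro h
    have hlt1 : t < 1 := lt_of_le_of_lt h hclt1
    have hb1 : 1 ≤ Real.cosh η - t * Real.sinh η := by
      have := (le_div_iff₀ hs).mp h
      linarith
    set b : ℝ := Real.cosh η - t * Real.sinh η with hbdef
    have he : Real.exp (η * -t) < 1 := Real.exp_lt_one_iff.mpr (by nlinarith)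
    set D : ℝ := b - Real.exp (η * -t) with hDdef
    have hD : 0 < D := by rw [hDdef]; linarith
    set μ : ℝ := (b - 1) / D with hμdef
    have hμ0 : 0 ≤ μ := div_nonneg (by linarith) hD.le
    have hμ1 : μ ≤ 1 := by
      rw [hμdef, div_le_one hD]; linarith
    have hμD : μ * D = b - 1 := div_mul_cancel₀ _ hD.ne'
    -- points in the hull
    have hgt : ((-t, Real.exp (η * -t)) : ℝ × ℝ) ∈
        convexHull ℝ ((fun x : ℝ => (x, Real.exp (η * x))) '' Set.Icc (-1 : ℝ) 1) :=
      subset_convexHull ℝ _ ⟨-t, ⟨by linarith, by linarith⟩, rfl⟩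
    have hm1 : ((-1, Real.exp (η * -1)) : ℝ × ℝ) ∈
        ((fun x : ℝ => (x, Real.exp (η * x))) '' Set.Icc (-1 : ℝ) 1) :=
      ⟨-1, ⟨le_refl _, by norm_num⟩, rfl⟩
    have hp1 : ((1, Real.exp (η * 1)) : ℝ × ℝ) ∈
        ((fun x : ℝ => (x, Real.exp (η * x))) '' Set.Icc (-1 : ℝ) 1) :=
      ⟨1, ⟨by norm_num, le_refl _⟩, rfl⟩
    have hq : ((-t, b) : ℝ × ℝ) ∈
        convexHull ℝ ((fun x : ℝ => (x, Real.exp (η * x))) '' Set.Icc (-1 : ℝ) 1) := by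
      apply segment_subset_convexHull hm1 hp1
      refine ⟨(1 + t) / 2, (1 - t) / 2, by linarith, by linarith, by ring, ?_⟩
      have h1 : η * (-1 : ℝ) = -η := by ring
      have h2 : η * (1 : ℝ) = η := by ring
      rw [h1, h2, Prod.ext_iff]
      constructor
      · simp only [Prod.smul_fst, Prod.fst_add, smul_eq_mul]; ring
      · simp only [Prod.smul_snd, Prod.snd_add, smul_eq_mul]
        rw [hbdef, Real.cosh_eq, Real.sinh_eq]; ring
    rw [hta]
    apply (convex_convexHull ℝ _).segment_subset hgt hq
    refine ⟨μ, 1 - μ, hμ0, by linarith, by ring, ?_⟩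
    rw [Prod.ext_iff]
    constructor
    · simp only [Prod.smul_fst, Prod.fst_add, smul_eq_mul]; ring
    · simp only [Prod.smul_snd, Prod.snd_add, smul_eq_mul]
      have : μ * Real.exp (η * -t) = μ * b - (b - 1) := by
        rw [← hμD, hDdef]; ring
      linarith
end

section
/- Let η ∈ (0, 1] and let c₂ = 0.32. Then for all x ∈ [-1, 1], the function u_η(x) = 1 + c₂ (exp(η x) - 1) - exp((η/2) x) + η (1/2 - c₂) x is nonnegative. -/
open Real

private theorem u_eta_key (t : ℝ) (h1 : -(1/2) ≤ t) (h2 : t ≤ 1/2) :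
    0 ≤ 1 + (0.32 : ℝ) * (Real.exp t ^ 2 - 1) - Real.exp t + 0.36 * t := by
  set y := Real.exp t with hy_def
  have hy : 0 < y := Real.exp_pos t
  have hlow : 1 + t ≤ y := by have := Real.add_one_le_exp t; linarith
  have hinv : y * Real.exp (-t) = 1 := by rw [hy_def, ← Real.exp_add]; simp
  rcases le_or_gt 0 t with htpos | htneg
  · have h3 : (1 - t/2 : ℝ) ≤ Real.exp (-(t/2)) := by
      have := Real.add_one_le_exp (-(t/2)); linarith
    have hnn : (0:ℝ) ≤ 1 - t/2 := by linarith
    have h4 : (1 - t/2 : ℝ) ^ 2 ≤ Real.exp (-t) := by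
      calc (1 - t/2 : ℝ)^2 ≤ Real.exp (-(t/2)) ^ 2 := by
            exact pow_le_pow_left₀ hnn h3 2
        _ = Real.exp (-t) := by
            rw [← Real.exp_nat_mul]; norm_num; ring_nf
    have hub : y * (1 - t/2)^2 ≤ 1 := by
      calc y * (1 - t/2)^2 ≤ y * Real.exp (-t) :=
            mul_le_mul_of_nonneg_left h4 hy.le
        _ = 1 := hinv
    nlinarith [sq_nonneg (y - 1.5625), sq_nonneg (y - 1 - t), sq_nonneg t,
      mul_nonneg htpos (sub_nonneg.2 hlow), mul_nonneg htpos htpos,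
      mul_nonneg (mul_nonneg htpos htpos) htpos,
      mul_nonneg htpos (sub_nonneg.2 hub),
      mul_nonneg hy.le (sub_nonneg.2 hub),
      mul_nonneg (sub_nonneg.2 hlow) (sub_nonneg.2 hub)]
  · have habs : |t| ≤ 1 := by rw [abs_le]; constructor <;> linarith
    have hb := Real.exp_bound habs (by norm_num : 0 < 4)
    have hsum : ∑ m ∈ Finset.range 4, t ^ m / m.factorial = 1 + t + t^2/2 + t^3/6 := by
      norm_num [Finset.sum_range_succ, Nat.factorial]
    rw [hsum] at hb
    have habs4 : |t| ^ 4 = t ^ 4 := by rw [← abs_pow, abs_of_nonneg (by positivity)]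
    have hub : y ≤ 1 + t + t^2/2 + t^3/6 + (5/96) * t^4 := by
      have h5 := (abs_sub_le_iff.1 hb).1
      rw [habs4] at h5
      norm_num [Nat.factorial] at h5
      linarith
    have htneg' : t ≤ 0 := htneg.le
    have hB : (0:ℝ) ≤ 1 + t/2 + t^2/6 + 5*t^3/96 := by
      nlinarith [sq_nonneg t, mul_nonneg (by linarith : (0:ℝ) ≤ t + 1/2) (sq_nonneg t)]
    have hy1 : y ≤ 1 := by
      nlinarith [mul_nonneg (neg_nonneg.2 htneg.le) hB]
    nlinarith [sq_nonneg (y - 1 - t), sq_nonneg t, sq_nonneg (t+1/2), sq_nonneg (y-1),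
      mul_nonneg (neg_nonneg.2 htneg') (neg_nonneg.2 htneg'),
      mul_nonneg (mul_nonneg (neg_nonneg.2 htneg') (neg_nonneg.2 htneg')) (neg_nonneg.2 htneg'),
      mul_nonneg (sub_nonneg.2 hub) (sub_nonneg.2 hlow),
      mul_nonneg (sub_nonneg.2 hub) (neg_nonneg.2 htneg'),
      mul_nonneg (sub_nonneg.2 hub) (sub_nonneg.2 hy1),
      sq_nonneg (t*(t+1/2))]

/-- **Dual feasibility certificate, small `η` regime.**
For `η ∈ (0, 1]` and `c₂ = 0.32`, the function
`u_η(x) = 1 + c₂ (exp(η x) - 1) - exp((η/2) x) + η (1/2 - c₂) x`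
is nonnegative on `[-1, 1]`. -/
theorem u_eta_nonneg_small_eta (η : ℝ) (hη : 0 < η) (hη1 : η ≤ 1)
    (x : ℝ) (hx : x ∈ Set.Icc (-1 : ℝ) 1) :
    0 ≤ 1 + (0.32 : ℝ) * (Real.exp (η * x) - 1) - Real.exp (η / 2 * x)
        + η * (1 / 2 - 0.32) * x := by
  obtain ⟨hx1, hx2⟩ := hx
  set t := η / 2 * x with ht_def
  have h1 : -(1/2) ≤ t := by nlinarith
  have h2 : t ≤ 1/2 := by nlinarith
  have hexp : Real.exp (η * x) = Real.exp t ^ 2 := by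
    rw [show η * x = t + t by rw [ht_def]; ring, Real.exp_add, sq]
  have hcoef : η * (1 / 2 - 0.32) * x = 0.36 * t := by rw [ht_def]; ring
  rw [hexp, hcoef]
  exact u_eta_key t h1 h2
end

section
/- Let η > 1, let α = (1/2)(√e - 1)², and let c₂ = 1/2 - α/η. Then for all x ∈ [-1, 1], the function u_η(x) = 1 + c₂ (exp(η x) - 1) - exp((η/2) x) + η (1/2 - c₂) x is nonnegative. -/
open Real

private lemma exp_half_mul : Real.exp (1/2) * Real.exp (1/2) = Real.exp 1 := by
  rw [← Real.exp_add]; norm_num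

private lemma exp_half_gt : (1.6487 : ℝ) < Real.exp (1/2) := by
  have h := Real.exp_one_gt_d9
  have hm := exp_half_mul
  have hp : (0:ℝ) < Real.exp (1/2) := Real.exp_pos _
  nlinarith

private lemma exp_half_lt : Real.exp (1/2) < 1.6488 := by
  have h := Real.exp_one_lt_d9
  have hm := exp_half_mul
  have hp : (0:ℝ) < Real.exp (1/2) := Real.exp_pos _
  nlinarith

noncomputable def aCst : ℝ := (Real.exp (1/2) - 1)^2 / 2

private lemma aCst_pos : 0 < aCst := by
  have := exp_half_gt; unfold aCst; nlinarith

private lemma aCst_le : aCst ≤ 1/4 := by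
  have := exp_half_lt; have := exp_half_gt; unfold aCst; nlinarith

private lemma two_sub_le : 2 - Real.exp (1/2) ≤ 2 * aCst := by
  have := exp_half_gt; have := exp_half_lt; unfold aCst; nlinarith

private lemma hasDeriv_lin (t : ℝ) : HasDerivAt (fun u : ℝ => 2*u) 2 t := by
  simpa using (hasDerivAt_id t).const_mul (2:ℝ)

private lemma hasDeriv_exp2 (t : ℝ) :
    HasDerivAt (fun u : ℝ => Real.exp (2*u)) (2 * Real.exp (2*t)) t := by
  have h := (hasDeriv_lin t).exp
  convert h using 1
  ring

private lemma Q_nonneg (t : ℝ) : 0 ≤ Real.exp (2*t) - 2*t - 1 := by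
  nlinarith [Real.add_one_le_exp (2*t)]

/-- For `s ≥ 0`: `e^{2s} - 2s - 1 ≤ 2 (e^s - 1)^2`. -/
private lemma lemA {s : ℝ} (hs : 0 ≤ s) :
    Real.exp (2*s) - 2*s - 1 ≤ 2 * (Real.exp s - 1)^2 := by
  set f : ℝ → ℝ := fun t => Real.exp (2*t) - 4*Real.exp t + (2*t + 3) with hf
  have hd : ∀ t : ℝ, HasDerivAt f (2*Real.exp (2*t) - 4*Real.exp t + 2) t := by
    intro t
    have h1 := hasDeriv_exp2 t
    have h2 := (Real.hasDerivAt_exp t).const_mul (4:ℝ)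
    have h3 := (hasDeriv_lin t).add_const (3:ℝ)
    have := (h1.sub h2).add h3
    exact this
  have hmono : MonotoneOn f (Set.Ici (0:ℝ)) := by
    apply monotoneOn_of_deriv_nonneg (convex_Ici 0)
    · exact fun t _ => (hd t).continuousAt.continuousWithinAt
    · exact fun t _ => (hd t).differentiableAt.differentiableWithinAt
    · intro t _
      rw [(hd t).deriv]
      have hee : Real.exp (2*t) = Real.exp t * Real.exp t := by
        rw [two_mul, Real.exp_add]
      rw [hee]
      nlinarith [sq_nonneg (Real.exp t - 1)]
  have h0 : f 0 ≤ f s := hmono Set.self_mem_Ici hs hs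
  simp only [hf] at h0
  norm_num [Real.exp_zero] at h0
  have hee : Real.exp (2*s) = Real.exp s * Real.exp s := by
    rw [two_mul, Real.exp_add]
  rw [hee] at h0 ⊢
  nlinarith [h0]

private lemma endpoint_zero :
    1/2*(Real.exp (-(1/2)) - 1)^2
      - aCst * (Real.exp (-(1/2)) * Real.exp (-(1/2))) = 0 := by
  have hq : Real.exp (-(1/2)) * Real.exp (1/2) = 1 := by
    rw [← Real.exp_add]; norm_num
  unfold aCst
  linear_combination ((2*Real.exp (-(1/2)) - Real.exp (-(1/2)) * Real.exp (1/2) - 1)/2) * hq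

/-- For `-1/2 ≤ s ≤ 0`: `aCst (e^{2s} - 2s - 1) ≤ (1/2)(e^s - 1)^2`. -/
private lemma lemD {s : ℝ} (h1 : -(1/2) ≤ s) (h2 : s ≤ 0) :
    aCst * (Real.exp (2*s) - 2*s - 1) ≤ 1/2 * (Real.exp s - 1)^2 := by
  have hA0 := aCst_pos
  have hA4 := aCst_le
  have h2A : (0:ℝ) < 1 - 2*aCst := by linarith
  set f : ℝ → ℝ := fun t => 1/2*(Real.exp t - 1)^2 - aCst*(Real.exp (2*t) - 2*t - 1) with hf
  have hd : ∀ t : ℝ,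
      HasDerivAt f ((1 - 2*aCst)*(Real.exp t * Real.exp t) - Real.exp t + 2*aCst) t := by
    intro t
    have h1' : HasDerivAt (fun u : ℝ => Real.exp u - 1) (Real.exp t) t :=
      (Real.hasDerivAt_exp t).sub_const 1
    have hsq := (h1'.pow 2).const_mul (1/2 : ℝ)
    have h2' := hasDeriv_exp2 t
    have hin := ((h2'.sub (hasDeriv_lin t)).sub_const (1:ℝ)).const_mul aCst
    have hcomb := hsq.sub hin
    have hee : Real.exp (2*t) = Real.exp t * Real.exp t := by
      rw [two_mul, Real.exp_add]
    refine hcomb.congr_deriv ?_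
    rw [hee]
    norm_num
    ring
  set c : ℝ := 2*aCst/(1 - 2*aCst) with hc
  have hc_pos : 0 < c := by positivity
  have hc_le : c ≤ 1 := by
    rw [hc, div_le_one h2A]; linarith
  set m : ℝ := Real.log c with hm
  have hexpm : Real.exp m = c := Real.exp_log hc_pos
  have hm0 : m ≤ 0 := Real.log_nonpos hc_pos.le hc_le
  have hm1 : -(1/2) ≤ m := by
    rw [hm, Real.le_log_iff_exp_le hc_pos, hc, le_div_iff₀ h2A]
    have hq : Real.exp (-(1/2)) * Real.exp (1/2) = 1 := by
      rw [← Real.exp_add]; norm_num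
    have key : Real.exp (-(1/2)) * (1 - 2*aCst) = 2 - Real.exp (1/2) := by
      unfold aCst
      linear_combination (2 - Real.exp (1/2)) * hq
    rw [key]
    exact two_sub_le
  have mono1 : MonotoneOn f (Set.Icc (-(1/2)) m) := by
    apply monotoneOn_of_deriv_nonneg (convex_Icc _ _)
    · exact fun t _ => (hd t).continuousAt.continuousWithinAt
    · exact fun t _ => (hd t).differentiableAt.differentiableWithinAt
    · intro t ht
      rw [interior_Icc] at ht
      rw [(hd t).deriv]
      have he1 : Real.exp t < 1 := by
        rw [← Real.exp_zero]; exact Real.exp_lt_exp.2 (lt_of_lt_of_le ht.2 hm0)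
      have he2 : (1 - 2*aCst) * Real.exp t ≤ 2*aCst := by
        have : Real.exp t ≤ c := by
          rw [← hexpm]; exact Real.exp_le_exp.2 ht.2.le
        rw [hc] at this
        calc (1 - 2*aCst) * Real.exp t ≤ (1 - 2*aCst) * (2*aCst/(1-2*aCst)) := by
              exact mul_le_mul_of_nonneg_left this h2A.le
          _ = 2*aCst := by field_simp
      nlinarith [mul_nonneg (by linarith : (0:ℝ) ≤ 1 - Real.exp t)
        (by linarith : (0:ℝ) ≤ 2*aCst - (1 - 2*aCst)*Real.exp t)]
  have mono2 : AntitoneOn f (Set.Icc m 0) := by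
    apply antitoneOn_of_deriv_nonpos (convex_Icc _ _)
    · exact fun t _ => (hd t).continuousAt.continuousWithinAt
    · exact fun t _ => (hd t).differentiableAt.differentiableWithinAt
    · intro t ht
      rw [interior_Icc] at ht
      rw [(hd t).deriv]
      have he1 : Real.exp t < 1 := by
        rw [← Real.exp_zero]; exact Real.exp_lt_exp.2 ht.2
      have he2 : 2*aCst ≤ (1 - 2*aCst) * Real.exp t := by
        have : c ≤ Real.exp t := by
          rw [← hexpm]; exact Real.exp_le_exp.2 ht.1.le
        rw [hc] at this
        calc 2*aCst = (1 - 2*aCst) * (2*aCst/(1-2*aCst)) := by field_simp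
          _ ≤ (1 - 2*aCst) * Real.exp t := mul_le_mul_of_nonneg_left this h2A.le
      nlinarith [mul_nonneg (by linarith : (0:ℝ) ≤ 1 - Real.exp t)
        (by linarith : (0:ℝ) ≤ (1 - 2*aCst)*Real.exp t - 2*aCst)]
  have hfend : f (-(1/2)) = 0 := by
    have hq2 : Real.exp (2*(-(1/2))) = Real.exp (-(1/2)) * Real.exp (-(1/2)) := by
      rw [← Real.exp_add]; norm_num
    have := endpoint_zero
    simp only [hf, hq2]
    linarith [this]
  have hf0 : f 0 = 0 := by norm_num [hf]
  rcases le_or_gt s m with hsm | hsm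
  · have : f (-(1/2)) ≤ f s :=
      mono1 ⟨le_refl _, hm1⟩ ⟨h1, hsm⟩ h1
    rw [hfend] at this
    simp only [hf] at this
    linarith
  · have : f 0 ≤ f s :=
      mono2 ⟨hsm.le, h2⟩ ⟨hm0, le_refl _⟩ h2
    rw [hf0] at this
    simp only [hf] at this
    linarith

/-- For `s ≤ -1/2`: `aCst (e^{2s} - 2s - 1) ≤ (-s)(e^s - 1)^2`. -/
private lemma lemE {s : ℝ} (hs : s ≤ -(1/2)) :
    aCst * (Real.exp (2*s) - 2*s - 1) ≤ (-s) * (Real.exp s - 1)^2 := by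
  have hA0 := aCst_pos
  have hA4 := aCst_le
  set f : ℝ → ℝ := fun t => (-t)*(Real.exp t - 1)^2 - aCst*(Real.exp (2*t) - 2*t - 1) with hf
  have hd : ∀ t : ℝ, HasDerivAt f
      (-(Real.exp t - 1)^2 + (-t)*(2*(Real.exp t - 1)*Real.exp t)
        - aCst*(2*(Real.exp t*Real.exp t) - 2)) t := by
    intro t
    have hneg : HasDerivAt (fun u : ℝ => -u) (-1) t := by
      exact (hasDerivAt_id t).neg
    have h1' : HasDerivAt (fun u : ℝ => Real.exp u - 1) (Real.exp t) t :=
      (Real.hasDerivAt_exp t).sub_const 1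
    have hsq := h1'.pow 2
    have hprod := hneg.mul hsq
    have h2' := hasDeriv_exp2 t
    have hin := ((h2'.sub (hasDeriv_lin t)).sub_const (1:ℝ)).const_mul aCst
    have hcomb := hprod.sub hin
    have hee : Real.exp (2*t) = Real.exp t * Real.exp t := by
      rw [two_mul, Real.exp_add]
    refine hcomb.congr_deriv ?_
    rw [hee]
    norm_num
  have hanti : AntitoneOn f (Set.Iic (-(1/2) : ℝ)) := by
    apply antitoneOn_of_deriv_nonpos (convex_Iic _)
    · exact fun t _ => (hd t).continuousAt.continuousWithinAt
    · exact fun t _ => (hd t).differentiableAt.differentiableWithinAt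
    · intro t ht
      rw [interior_Iic] at ht
      rw [(hd t).deriv]
      have htlt : t < -(1/2) := ht
      have he1 : Real.exp t < 1 := by
        rw [← Real.exp_zero]; exact Real.exp_lt_exp.2 (by linarith)
      have he0 : 0 < Real.exp t := Real.exp_pos t
      have hbr : (1 - Real.exp t) + (-2*t)*Real.exp t - 2*aCst*(1 + Real.exp t) ≥ 0 := by
        nlinarith
      nlinarith [mul_nonneg (by linarith : (0:ℝ) ≤ 1 - Real.exp t) hbr]
  have hfend : f (-(1/2)) = 0 := by
    have hq2 : Real.exp (2*(-(1/2))) = Real.exp (-(1/2)) * Real.exp (-(1/2)) := by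
      rw [← Real.exp_add]; norm_num
    have := endpoint_zero
    simp only [hf, hq2]
    linarith [this]
  have : f (-(1/2)) ≤ f s := hanti (Set.mem_Iic.2 hs) (Set.mem_Iic.2 le_rfl) hs
  rw [hfend] at this
  simp only [hf] at this
  linarith

private lemma key_lemma (η s : ℝ) (hη : 1 < η) (hs : -(η/2) ≤ s) :
    aCst/η * (Real.exp (2*s) - 2*s - 1) ≤ 1/2 * (Real.exp s - 1)^2 := by
  have hA0 := aCst_pos
  have hA4 := aCst_le
  have hη0 : (0:ℝ) < η := by linarith
  have hQ : 0 ≤ Real.exp (2*s) - 2*s - 1 := Q_nonneg s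
  have hβA : aCst/η ≤ aCst := div_le_self hA0.le hη.le
  rcases le_or_gt (-(1/2)) s with h0 | h0
  · rcases le_or_gt 0 s with h1 | h1
    · have hA := lemA h1
      calc aCst/η * (Real.exp (2*s) - 2*s - 1)
          ≤ aCst * (Real.exp (2*s) - 2*s - 1) := mul_le_mul_of_nonneg_right hβA hQ
        _ ≤ aCst * (2 * (Real.exp s - 1)^2) := mul_le_mul_of_nonneg_left hA hA0.le
        _ ≤ 1/2 * (Real.exp s - 1)^2 := by nlinarith [sq_nonneg (Real.exp s - 1)]
    · have hD := lemD h0 h1.le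
      calc aCst/η * (Real.exp (2*s) - 2*s - 1)
          ≤ aCst * (Real.exp (2*s) - 2*s - 1) := mul_le_mul_of_nonneg_right hβA hQ
        _ ≤ 1/2 * (Real.exp s - 1)^2 := hD
  · have hE := lemE h0.le
    have h2s : (0:ℝ) < -(2*s) := by linarith
    have hsη : -(2*s) ≤ η := by linarith
    have hβ : aCst/η ≤ aCst/(-(2*s)) :=
      div_le_div_of_nonneg_left hA0.le h2s hsη
    calc aCst/η * (Real.exp (2*s) - 2*s - 1)
        ≤ aCst/(-(2*s)) * (Real.exp (2*s) - 2*s - 1) := mul_le_mul_of_nonneg_right hβ hQ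
      _ ≤ 1/2 * (Real.exp s - 1)^2 := by
          rw [div_mul_eq_mul_div, div_le_iff₀ h2s]
          nlinarith [hE]

/-- **Dual feasibility certificate, large `η` regime.**
For `η > 1`, `α = (1/2)(√e - 1)²` and `c₂ = 1/2 - α/η`, the function
`u_η(x) = 1 + c₂ (exp(η x) - 1) - exp((η/2) x) + η (1/2 - c₂) x`
is nonnegative on `[-1, 1]`. -/
theorem u_eta_nonneg_large_eta (η : ℝ) (hη : 1 < η)
    (x : ℝ) (hx : x ∈ Set.Icc (-1 : ℝ) 1) :
    0 ≤ 1 + (1 / 2 - (1 / 2 * (Real.sqrt (Real.exp 1) - 1) ^ 2) / η)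
          * (Real.exp (η * x) - 1)
        - Real.exp (η / 2 * x)
        + η * (1 / 2 - (1 / 2 - (1 / 2 * (Real.sqrt (Real.exp 1) - 1) ^ 2) / η)) * x := by
  obtain ⟨hx1, hx2⟩ := hx
  have hη0 : (0:ℝ) < η := by linarith
  have hsq : Real.sqrt (Real.exp 1) = Real.exp (1/2) := by
    rw [show Real.exp 1 = Real.exp (1/2) * Real.exp (1/2) from exp_half_mul.symm,
        Real.sqrt_mul_self (Real.exp_pos _).le]
  rw [hsq, show (1:ℝ)/2 * (Real.exp (1/2) - 1)^2 = aCst from by unfold aCst; ring,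
      show η * x = 2 * (η/2 * x) from by ring]
  set s : ℝ := η/2 * x with hsdef
  have hs : -(η/2) ≤ s := by
    rw [hsdef]; nlinarith
  have key := key_lemma η s hη hs
  have hEE : Real.exp (2*s) = Real.exp s * Real.exp s := by
    rw [two_mul, Real.exp_add]
  have hiden : 1 + (1/2 - aCst/η) * (Real.exp (2*s) - 1) - Real.exp s
        + η * (1/2 - (1/2 - aCst/η)) * x
      = 1/2*(Real.exp s - 1)^2 - aCst/η * (Real.exp (2*s) - 2*s - 1) := by
    rw [hEE, hsdef]
    field_simp
    ring
  rw [hiden]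
  linarith [key]
end

section
/- For every η ≥ 1, the inequality ((1 + exp(-η))/2 - exp(-η/2)) + (1/2)(√e - 1)² · ((1 - exp(-η))/η - 1) ≥ 0 holds. -/
set_option maxHeartbeats 800000


open Real

/-- **Analytic inequality certifying the choice `α = (1/2)(√e - 1)²`.**
For every `η ≥ 1`,
`((1 + exp(-η))/2 - exp(-η/2)) + (1/2)(√e - 1)² ((1 - exp(-η))/η - 1) ≥ 0`. -/
theorem alpha_choice_inequality (η : ℝ) (hη : 1 ≤ η) :
    0 ≤ ((1 + Real.exp (-η)) / 2 - Real.exp (-η / 2))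
        + (1 / 2) * (Real.sqrt (Real.exp 1) - 1) ^ 2
          * ((1 - Real.exp (-η)) / η - 1) := by
  set s := Real.sqrt (Real.exp 1) with hs
  have hs2 : s ^ 2 = Real.exp 1 := Real.sq_sqrt (Real.exp_pos 1).le
  have hs0 : 0 < s := Real.sqrt_pos.mpr (Real.exp_pos 1)
  set t := Real.exp (-η / 2) with htdef
  set t0 := Real.exp (-(1:ℝ) / 2) with ht0def
  have ht : 0 < t := Real.exp_pos _
  have ht0 : 0 < t0 := Real.exp_pos _
  have htle : t ≤ t0 := Real.exp_le_exp.mpr (by linarith)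
  have hseq : s = Real.exp (1/2 : ℝ) := by
    rw [hs, show Real.exp 1 = Real.exp (1/2 : ℝ) * Real.exp (1/2 : ℝ) by
      rw [← Real.exp_add]; norm_num]
    exact Real.sqrt_mul_self (Real.exp_pos _).le
  have hst : s * t0 = 1 := by
    rw [hseq, ht0def, ← Real.exp_add]; norm_num
  have hexpη : Real.exp (-η) = t ^ 2 := by
    rw [htdef, sq, ← Real.exp_add]; ring_nf
  have hηpos : (0:ℝ) < η := by linarith
  have hηt : η * t ≤ 2 * t0 - t := by
    have h1 : (η - 1)/2 + 1 ≤ Real.exp ((η - 1)/2) := Real.add_one_le_exp _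
    have h2 : Real.exp ((η - 1)/2) * t = t0 := by
      rw [htdef, ht0def, ← Real.exp_add]; ring_nf
    nlinarith [ht]
  have he1 : (2.7182818283 : ℝ) < Real.exp 1 := Real.exp_one_gt_d9
  have he2 : Real.exp 1 < 2.7182818286 := Real.exp_one_lt_d9
  have ht0b1 : (0.6065 : ℝ) < t0 := by nlinarith [hst, hs2, hs0, ht0]
  have ht0b2 : t0 < (0.6066 : ℝ) := by nlinarith [hst, hs2, hs0, ht0]
  have hsb1 : (1.648721 : ℝ) < s := by nlinarith [hs2, hs0]
  have hsb2 : s < (1.648722 : ℝ) := by nlinarith [hs2, hs0]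
  have key : 0 ≤ η * ((1 - t)^2 - (s - 1)^2) + (s - 1)^2 * (1 - t^2) := by
    rcases le_or_gt ((s - 1)^2) ((1 - t)^2) with hc | hc
    · have h1 : 0 ≤ η * ((1 - t)^2 - (s - 1)^2) :=
        mul_nonneg (by linarith) (by linarith)
      have h2 : 0 ≤ (s - 1)^2 * (1 - t^2) :=
        mul_nonneg (sq_nonneg _) (by nlinarith [ht.le, htle, ht0b2])
      linarith
    · -- multiply through by t > 0 and use η t ≤ 2 t0 - t
      have ha1 : (0.42083 : ℝ) < (s-1)^2 := by nlinarith [hsb1, hsb2]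
      have ha2 : (s-1)^2 < (0.42085 : ℝ) := by nlinarith [hsb1, hsb2]
      have hR : 0 ≤ (1 + (s-1)^2) * t^2 + (((s-1)^2 - 1) * t0 - 2) * t + 2 * (1 - (s-1)^2) := by
        nlinarith [sq_nonneg (t - 0.83), ht.le, ht0b1, ht0b2, ha1, ha2,
          mul_nonneg ht.le (by linarith : (0:ℝ) ≤ 0.42085 - (s-1)^2),
          mul_nonneg ht.le (by linarith : (0:ℝ) ≤ t0 - 0.6065),
          mul_nonneg ht.le (by linarith : (0:ℝ) ≤ 0.6066 - t0)]
      have hfac : (2 * t0 - t) * ((1 - t)^2 - (s - 1)^2) + (s - 1)^2 * t * (1 - t^2)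
          = (t0 - t) * ((1 + (s-1)^2) * t^2 + (((s-1)^2 - 1) * t0 - 2) * t + 2 * (1 - (s-1)^2)) := by
        linear_combination (-(t * (s * t0 + 1 - 2 * t0))) * hst
      have hQ : 0 ≤ (2 * t0 - t) * ((1 - t)^2 - (s - 1)^2) + (s - 1)^2 * t * (1 - t^2) := by
        rw [hfac]; exact mul_nonneg (by linarith) hR
      have hmul : (2 * t0 - t) * ((1 - t)^2 - (s - 1)^2) ≤ η * t * ((1 - t)^2 - (s - 1)^2) := by
        apply mul_le_mul_of_nonpos_right hηt (by linarith)
      have ht' : 0 ≤ η * t * ((1 - t)^2 - (s - 1)^2) + (s - 1)^2 * t * (1 - t^2) := by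
        linarith
      nlinarith [ht', ht]
  have heq : ((1 + Real.exp (-η)) / 2 - Real.exp (-η / 2))
        + (1 / 2) * (s - 1) ^ 2 * ((1 - Real.exp (-η)) / η - 1)
      = (η * ((1 - t)^2 - (s - 1)^2) + (s - 1)^2 * (1 - t^2)) / (2 * η) := by
    rw [hexpη, ← htdef]
    field_simp
    ring
  rw [heq]
  exact div_nonneg key (by linarith)
end

section
/- Let Z be a real random variable taking values in [-1, 1] almost surely, let n be a positive integer and a > 0 with E[Z] = a/n, and suppose E[exp(-η Z)] = 1 for some η > 0. If a/n < (exp(η) + exp(-η) - 2)/(exp(η) - exp(-η)), then E[exp(-(η/2) Z)] ≤ 1 - 0.18 η a / n when η ≤ 1, and E[exp(-(η/2) Z)] ≤ 1 - 0.21 a / n when η > 1. In particular, E[exp(-(η/2) Z)] ≤ 1 - 0.18 · min(η, 1) · a / n. -/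
open MeasureTheory Real

lemma log_le_half_sub_inv {u : ℝ} (hu : 1 ≤ u) : Real.log u ≤ (u - u⁻¹) / 2 := by
  have key : MonotoneOn (fun x : ℝ => (x - x⁻¹) / 2 - Real.log x) (Set.Ici 1) := by
    have hd : ∀ x ∈ Set.Ioi (1:ℝ),
        HasDerivAt (fun x : ℝ => (x - x⁻¹) / 2 - Real.log x)
          ((1 - (-(x^2)⁻¹)) / 2 - x⁻¹) x := by
      intro x hx
      have hx0 : (0:ℝ) < x := lt_trans one_pos hx
      exact (((hasDerivAt_id x).sub (hasDerivAt_inv hx0.ne')).div_const 2).sub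
        (Real.hasDerivAt_log hx0.ne')
    apply monotoneOn_of_deriv_nonneg (convex_Ici 1)
    · apply ContinuousOn.sub (ContinuousOn.div_const ?_ 2) ?_
      · exact (continuousOn_id.sub (continuousOn_inv₀.mono (by
          intro x hx; exact ne_of_gt (lt_of_lt_of_le one_pos hx))))
      · exact Real.continuousOn_log.mono (by
          intro x hx; exact ne_of_gt (lt_of_lt_of_le one_pos hx))
    · intro x hx
      rw [interior_Ici] at hx
      exact (hd x hx).differentiableAt.differentiableWithinAt
    · intro x hx
      rw [interior_Ici] at hx
      rw [(hd x hx).deriv]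
      have hx1 : (1:ℝ) < x := hx
      have hx0 : (0:ℝ) < x := lt_trans one_pos hx1
      rw [sub_nonneg]
      have hx2 : (0:ℝ) < x^2 := by positivity
      rw [le_div_iff₀ (by norm_num : (0:ℝ) < 2), ← sub_nonneg]
      have e1 : 1 - -(x ^ 2)⁻¹ - x⁻¹ * 2 = (x - 1)^2 / x^2 := by
        field_simp; ring
      rw [e1]; positivity
  have h0 : (fun x : ℝ => (x - x⁻¹) / 2 - Real.log x) 1 ≤
      (fun x : ℝ => (x - x⁻¹) / 2 - Real.log x) u :=
    key (Set.self_mem_Ici) hu hu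
  simp [Real.log_one] at h0
  linarith

lemma pade_le_log {u : ℝ} (hu : 1 ≤ u) : 2 * (u - 1) / (u + 1) ≤ Real.log u := by
  have key : MonotoneOn (fun x : ℝ => Real.log x - 2 + 4 * (x + 1)⁻¹) (Set.Ici 1) := by
    have hd : ∀ x ∈ Set.Ioi (1:ℝ),
        HasDerivAt (fun x : ℝ => Real.log x - 2 + 4 * (x + 1)⁻¹)
          (x⁻¹ + 4 * (-1 / (x+1)^2)) x := by
      intro x hx
      have hx0 : (0:ℝ) < x := lt_trans one_pos hx
      have h1 : HasDerivAt (fun x : ℝ => (x + 1)⁻¹) (-1 / (x+1)^2) x :=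
        ((hasDerivAt_id x).add_const 1).inv (by positivity)
      exact ((Real.hasDerivAt_log hx0.ne').sub_const 2).add (h1.const_mul 4)
    apply monotoneOn_of_deriv_nonneg (convex_Ici 1)
    · apply ContinuousOn.add
      · exact ContinuousOn.sub (Real.continuousOn_log.mono (by
          intro x hx; exact ne_of_gt (lt_of_lt_of_le one_pos hx))) continuousOn_const
      · exact ContinuousOn.mul continuousOn_const (ContinuousOn.inv₀
          (continuousOn_id.add continuousOn_const)
          (by intro x hx; simp only [Set.mem_Ici] at hx; positivity))
    · intro x hx
      rw [interior_Ici] at hx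
      exact (hd x hx).differentiableAt.differentiableWithinAt
    · intro x hx
      rw [interior_Ici] at hx
      rw [(hd x hx).deriv]
      have hx1 : (1:ℝ) < x := hx
      have hx0 : (0:ℝ) < x := lt_trans one_pos hx1
      have e1 : x⁻¹ + 4 * (-1 / (x+1)^2) = (x - 1)^2 / (x * (x+1)^2) := by
        field_simp; ring
      rw [e1]; positivity
  have h0 := key (Set.self_mem_Ici) hu hu
  simp only [Real.log_one] at h0
  have hu1 : (0:ℝ) < u + 1 := by linarith
  have e2 : 2 * (u - 1) / (u + 1) = 2 - 4 * (u + 1)⁻¹ := by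
    field_simp; ring
  rw [e2]
  norm_num at h0
  linarith

lemma half_sub_inv_le_log {v : ℝ} (h0 : 0 < v) (h1 : v ≤ 1) : (v - v⁻¹) / 2 ≤ Real.log v := by
  have hu : 1 ≤ v⁻¹ := (one_le_inv₀ h0).mpr h1
  have := log_le_half_sub_inv hu
  rw [Real.log_inv, inv_inv] at this
  linarith

lemma log_diff_lower {v₀ v : ℝ} (h0 : 0 < v₀) (h : v₀ ≤ v) :
    2 * (v - v₀) / (v + v₀) ≤ Real.log v - Real.log v₀ := by
  have hv : 0 < v := lt_of_lt_of_le h0 h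
  have hu : 1 ≤ v / v₀ := (one_le_div h0).mpr h
  have := pade_le_log hu
  rw [Real.log_div hv.ne' h0.ne'] at this
  have e : 2 * (v / v₀ - 1) / (v / v₀ + 1) = 2 * (v - v₀) / (v + v₀) := by
    rw [div_eq_div_iff (by positivity) (by positivity)]
    field_simp
  linarith [e ▸ this]

lemma Fmid {β v : ℝ} (hβ2 : β ≤ 1/2) (h0 : 0 < v) (h1 : v ≤ 1) (hv : 1 - 2*β ≤ 2*β*v) :
    0 ≤ β*v^2 - v + (1-2*β)*Real.log v + (1 - β) := by
  have hlog := half_sub_inv_le_log h0 h1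
  have h2b : (0:ℝ) ≤ 1 - 2*β := by linarith
  have step := mul_le_mul_of_nonneg_left hlog h2b
  have e : β*v^2 - v + (1-2*β)*((v - v⁻¹)/2) + (1-β)
      = (v-1)^2 * (2*β*v - (1-2*β)) / (2*v) := by
    field_simp
    ring
  have hnum : 0 ≤ (v-1)^2 * (2*β*v - (1-2*β)) / (2*v) :=
    div_nonneg (mul_nonneg (sq_nonneg _) (by linarith)) (by linarith)
  nlinarith [e ▸ hnum]

lemma F_nonneg {β v₀ v : ℝ} (hβ1 : 1/4 ≤ β) (hβ2 : β ≤ 1/2) (h0 : 0 < v₀)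
    (h01 : v₀ ≤ 1) (hv : v₀ ≤ v)
    (hF0 : 0 ≤ β*v₀^2 - v₀ + (1-2*β)*Real.log v₀ + (1 - β)) :
    0 ≤ β*v^2 - v + (1-2*β)*Real.log v + (1 - β) := by
  have hv0 : 0 < v := lt_of_lt_of_le h0 hv
  have h2b : (0:ℝ) ≤ 1 - 2*β := by linarith
  rcases le_or_gt 1 v with h1 | h1
  · -- region 1 : v ≥ 1
    have hlog := pade_le_log h1
    have step := mul_le_mul_of_nonneg_left hlog h2b
    have e : β*v^2 - v + (1-2*β)*(2*(v-1)/(v+1)) + (1-β)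
        = (v-1)^2 * (β*v - (1-3*β)) / (v+1) := by
      field_simp
      ring
    have hfac : (0:ℝ) ≤ β*v - (1-3*β) := by nlinarith
    have hnum : 0 ≤ (v-1)^2 * (β*v - (1-3*β)) / (v+1) :=
      div_nonneg (mul_nonneg (sq_nonneg _) hfac) (by linarith)
    nlinarith [e ▸ hnum]
  · rcases le_or_gt (1-2*β) (2*β*v) with h2 | h2
    · exact Fmid hβ2 hv0 h1.le h2
    · -- region 3 : v ≤ u*
      have hlog := log_diff_lower h0 hv
      have step := mul_le_mul_of_nonneg_left hlog h2b
      set s := v + v₀ with hs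
      have hs0 : 0 < s := by positivity
      have e : β*(v^2 - v₀^2) - (v - v₀) + (1-2*β)*(2*(v-v₀)/s)
          = (v - v₀) * ((s-2)*(β*s-(1-2*β))) / s := by
        field_simp
        ring
      have hf2 : β*s - (1-2*β) ≤ 0 := by nlinarith
      have hf1 : s - 2 ≤ 0 := by nlinarith
      have hnum : 0 ≤ (v - v₀) * ((s-2)*(β*s-(1-2*β))) / s :=
        div_nonneg (mul_nonneg (by linarith) (by nlinarith [mul_nonneg (by linarith : (0:ℝ) ≤ 2 - s) (by linarith : (0:ℝ) ≤ (1-2*β) - β*s)])) hs0.le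
      nlinarith [e ▸ hnum]

lemma exp_neg_half_ub : Real.exp (-(1/2) : ℝ) ≤ 0.60653067 := by
  have he := Real.exp_one_gt_d9
  have hsq : Real.exp ((1:ℝ)/2) * Real.exp ((1:ℝ)/2) = Real.exp 1 := by
    rw [← Real.exp_add]; norm_num
  have hr : (1.64872125 : ℝ) ≤ Real.exp ((1:ℝ)/2) := by
    nlinarith [Real.exp_pos ((1:ℝ)/2)]
  rw [Real.exp_neg]
  rw [inv_le_comm₀ (Real.exp_pos _) (by norm_num)]
  calc (0.60653067 : ℝ)⁻¹ ≤ 1.64872125 := by norm_num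
    _ ≤ Real.exp ((1:ℝ)/2) := hr

lemma exp_neg_one_lb : (0.36787944 : ℝ) ≤ Real.exp (-1 : ℝ) := by
  have he := Real.exp_one_lt_d9
  rw [Real.exp_neg]
  rw [le_inv_comm₀ (by norm_num) (Real.exp_pos _)]
  calc Real.exp 1 ≤ 2.7182818286 := he.le
    _ ≤ (0.36787944 : ℝ)⁻¹ := by norm_num

lemma exp_neg_three_quarter_ub : Real.exp (-(3/4) : ℝ) ≤ 0.473 := by
  have he := Real.exp_one_gt_d9
  have hsq : Real.exp ((3:ℝ)/4) ^ 4 = Real.exp 1 ^ 3 := by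
    rw [← Real.exp_nat_mul, ← Real.exp_nat_mul]; norm_num
  have hr : (2.114165 : ℝ) ≤ Real.exp ((3:ℝ)/4) := by
    by_contra hcon
    push_neg at hcon
    have h1 : Real.exp ((3:ℝ)/4)^4 < (2.114165:ℝ)^4 :=
      pow_lt_pow_left₀ hcon (Real.exp_pos _).le (by norm_num)
    have h2 : (2.7182818283:ℝ)^3 < Real.exp 1 ^ 3 :=
      pow_lt_pow_left₀ he (by norm_num) (by norm_num)
    rw [hsq] at h1
    nlinarith
  rw [Real.exp_neg]
  rw [inv_le_comm₀ (Real.exp_pos _) (by norm_num)]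
  calc (0.473 : ℝ)⁻¹ ≤ 2.114165 := by norm_num
    _ ≤ Real.exp ((3:ℝ)/4) := hr

lemma exp_neg_three_half_lb : (0.223 : ℝ) ≤ Real.exp (-(3/2) : ℝ) := by
  have he := Real.exp_one_lt_d9
  have hsq : Real.exp ((3:ℝ)/2) ^ 2 = Real.exp 1 ^ 3 := by
    rw [← Real.exp_nat_mul, ← Real.exp_nat_mul]; norm_num
  have hr : Real.exp ((3:ℝ)/2) ≤ 4.4817 := by
    by_contra hcon
    push_neg at hcon
    have h1 : (4.4817:ℝ)^2 < Real.exp ((3:ℝ)/2)^2 :=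
      pow_lt_pow_left₀ hcon (by norm_num) (by norm_num)
    have h2 : Real.exp 1 ^ 3 < (2.7182818286:ℝ)^3 :=
      pow_lt_pow_left₀ he (Real.exp_pos _).le (by norm_num)
    rw [hsq] at h1
    nlinarith
  rw [Real.exp_neg]
  rw [le_inv_comm₀ (by norm_num) (Real.exp_pos _)]
  calc Real.exp ((3:ℝ)/2) ≤ 4.4817 := hr
    _ ≤ (0.223 : ℝ)⁻¹ := by norm_num

lemma exp_neg_five_quarter_ub : Real.exp (-(5/4) : ℝ) ≤ 0.29 := by
  have he := Real.exp_one_gt_d9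
  have hsq : Real.exp ((5:ℝ)/4) ^ 4 = Real.exp 1 ^ 5 := by
    rw [← Real.exp_nat_mul, ← Real.exp_nat_mul]; norm_num
  have hr : (3.449 : ℝ) ≤ Real.exp ((5:ℝ)/4) := by
    by_contra hcon
    push_neg at hcon
    have h1 : Real.exp ((5:ℝ)/4)^4 < (3.449:ℝ)^4 :=
      pow_lt_pow_left₀ hcon (Real.exp_pos _).le (by norm_num)
    have h2 : (2.7182818283:ℝ)^5 < Real.exp 1 ^ 5 :=
      pow_lt_pow_left₀ he (by norm_num) (by norm_num)
    rw [hsq] at h1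
    nlinarith
  rw [Real.exp_neg]
  rw [inv_le_comm₀ (Real.exp_pos _) (by norm_num)]
  calc (0.29 : ℝ)⁻¹ ≤ 3.449 := by norm_num
    _ ≤ Real.exp ((5:ℝ)/4) := hr

lemma exp_neg_quad_ub {t : ℝ} (ht : 0 ≤ t) : Real.exp (-t) ≤ 1 - t + t^2/2 := by
  have hq : 1 + t + t^2/2 ≤ Real.exp t := by
    have h := Real.sum_le_exp_of_nonneg ht 3
    have e : ∑ i ∈ Finset.range 3, t^i/(Nat.factorial i) = 1 + t + t^2/2 := by
      simp [Finset.sum_range_succ, Nat.factorial]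
    rwa [e] at h
  have hpos2 : (0:ℝ) < 1 - t + t^2/2 := by nlinarith [sq_nonneg (t-1)]
  have hmul : (1:ℝ) ≤ (1 - t + t^2/2) * (1 + t + t^2/2) := by nlinarith [sq_nonneg (t^2)]
  have h2 := mul_le_mul_of_nonneg_left hq hpos2.le
  have h3 : (1:ℝ) ≤ (1 - t + t^2/2) * Real.exp t := le_trans hmul h2
  rw [Real.exp_neg]
  have hE := Real.exp_pos t
  have hc := mul_inv_cancel₀ (ne_of_gt hE)
  nlinarith [mul_pos hpos2 hE]

lemma P_nonneg {η : ℝ} (h1 : 1 ≤ η) :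
    2*η*Real.exp (-(η/2)) ≤ 0.58*η + 0.42 + (η-0.42)*Real.exp (-η) := by
  have hηpos : (0:ℝ) < η := lt_of_lt_of_le one_pos h1
  have hcoef : (0:ℝ) ≤ η - 0.42 := by linarith
  rcases le_or_gt η (3/2) with hc | hc
  · -- 1 ≤ η ≤ 3/2
    set t := (η - 1)/2 with htdef
    have ht0 : 0 ≤ t := by simp [htdef]; linarith
    have ht4 : t ≤ 1/4 := by simp [htdef]; linarith
    have hη : η = 1 + 2*t := by simp [htdef]; ring
    have e1 : Real.exp (-(η/2)) = Real.exp (-(1/2):ℝ) * Real.exp (-t) := by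
      rw [← Real.exp_add]; congr 1; rw [hη]; ring
    have e2 : Real.exp (-η) = Real.exp (-1:ℝ) * Real.exp (-(2*t)) := by
      rw [← Real.exp_add]; congr 1; rw [hη]; ring
    have hb1 : Real.exp (-(η/2)) ≤ 0.60653067 * (1 - t + t^2/2) := by
      rw [e1]
      apply mul_le_mul exp_neg_half_ub (exp_neg_quad_ub ht0) (Real.exp_pos _).le (by norm_num)
    have hb2 : 0.36787944 * (1 - 2*t) ≤ Real.exp (-η) := by
      rw [e2]
      have h2t : 1 - 2*t ≤ Real.exp (-(2*t)) := by
        have := Real.add_one_le_exp (-(2*t)); linarith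
      rcases le_or_gt (1 - 2*t) 0 with hneg | hpos'
      · calc 0.36787944 * (1 - 2*t) ≤ 0 := by nlinarith
          _ ≤ _ := by positivity
      · apply mul_le_mul exp_neg_one_lb h2t hpos'.le (Real.exp_pos _).le
    have hb3 : (0:ℝ) ≤ 1 - t + t^2/2 := by nlinarith
    rw [hη]
    have key : 2*(1+2*t)*(0.60653067 * (1 - t + t^2/2)) ≤
        0.58*(1+2*t) + 0.42 + ((1+2*t)-0.42)*(0.36787944 * (1 - 2*t)) := by
      nlinarith [mul_nonneg (mul_nonneg ht0 ht0) (by linarith : (0:ℝ) ≤ 1/4 - t), sq_nonneg t]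
    calc 2*(1+2*t)*Real.exp (-((1+2*t)/2)) ≤ 2*(1+2*t)*(0.60653067 * (1 - t + t^2/2)) := by
          apply mul_le_mul_of_nonneg_left _ (by linarith)
          rw [← hη]; exact hb1
      _ ≤ 0.58*(1+2*t) + 0.42 + ((1+2*t)-0.42)*(0.36787944 * (1 - 2*t)) := key
      _ ≤ 0.58*(1+2*t) + 0.42 + ((1+2*t)-0.42)*Real.exp (-(1+2*t)) := by
          apply add_le_add_right
          apply mul_le_mul_of_nonneg_left _ (by linarith)
          rw [← hη]; exact hb2
  · rcases le_or_gt η (5/2) with hc2 | hc2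
    · -- 3/2 ≤ η ≤ 5/2
      set s := (η - 3/2)/2 with hsdef
      have hs0 : 0 ≤ s := by simp [hsdef]; linarith
      have hs4 : s ≤ 1/2 := by simp [hsdef]; linarith
      have hη : η = 3/2 + 2*s := by simp [hsdef]; ring
      have e1 : Real.exp (-(η/2)) = Real.exp (-(3/4):ℝ) * Real.exp (-s) := by
        rw [← Real.exp_add]; congr 1; rw [hη]; ring
      have e2 : Real.exp (-η) = Real.exp (-(3/2):ℝ) * Real.exp (-(2*s)) := by
        rw [← Real.exp_add]; congr 1; rw [hη]; ring
      have hb1 : Real.exp (-(η/2)) ≤ 0.473 * (1 - s + s^2/2) := by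
        rw [e1]
        apply mul_le_mul exp_neg_three_quarter_ub (exp_neg_quad_ub hs0) (Real.exp_pos _).le (by norm_num)
      have hb2 : 0.223 * (1 - 2*s) ≤ Real.exp (-η) := by
        rw [e2]
        have h2t : 1 - 2*s ≤ Real.exp (-(2*s)) := by
          have := Real.add_one_le_exp (-(2*s)); linarith
        apply mul_le_mul exp_neg_three_half_lb h2t (by linarith) (Real.exp_pos _).le
      have key : 2*(3/2+2*s)*(0.473 * (1 - s + s^2/2)) ≤
          0.58*(3/2+2*s) + 0.42 + ((3/2+2*s)-0.42)*(0.223 * (1 - 2*s)) := by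
        nlinarith [mul_nonneg (mul_nonneg hs0 hs0) hs0, sq_nonneg s, mul_nonneg hs0 (by linarith : (0:ℝ) ≤ 1/2 - s)]
      rw [hη]
      calc 2*(3/2+2*s)*Real.exp (-((3/2+2*s)/2)) ≤ 2*(3/2+2*s)*(0.473 * (1 - s + s^2/2)) := by
            apply mul_le_mul_of_nonneg_left _ (by linarith)
            rw [← hη]; exact hb1
        _ ≤ 0.58*(3/2+2*s) + 0.42 + ((3/2+2*s)-0.42)*(0.223 * (1 - 2*s)) := key
        _ ≤ 0.58*(3/2+2*s) + 0.42 + ((3/2+2*s)-0.42)*Real.exp (-(3/2+2*s)) := by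
            apply add_le_add_right
            apply mul_le_mul_of_nonneg_left _ (by linarith)
            rw [← hη]; exact hb2
    · -- η ≥ 5/2
      have hb1 : Real.exp (-(η/2)) ≤ 0.29 := by
        calc Real.exp (-(η/2)) ≤ Real.exp (-(5/4) : ℝ) := by
              apply Real.exp_le_exp.mpr; linarith
          _ ≤ 0.29 := exp_neg_five_quarter_ub
      have : 2*η*Real.exp (-(η/2)) ≤ 2*η*0.29 := by
        apply mul_le_mul_of_nonneg_left hb1 (by linarith)
      have hpos : 0 ≤ (η-0.42)*Real.exp (-η) := mul_nonneg hcoef (Real.exp_pos _).le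
      nlinarith

lemma pointwise_bound {η β x : ℝ} (hη : 0 < η) (hx : x ≤ 1) (hβ1 : 1/4 ≤ β) (hβ2 : β ≤ 1/2)
    (hF0 : 0 ≤ β*(Real.exp (-(η/2)))^2 - Real.exp (-(η/2)) + (1-2*β)*(-(η/2)) + (1 - β)) :
    Real.exp (-(η/2) * x) ≤ (1-β) + β * Real.exp (-η * x) - (η*(1/2-β))*x := by
  have h0 : 0 < Real.exp (-(η/2)) := Real.exp_pos _
  have h01 : Real.exp (-(η/2)) ≤ 1 := by
    rw [← Real.exp_zero]
    exact Real.exp_le_exp.mpr (by linarith)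
  have hv : Real.exp (-(η/2)) ≤ Real.exp (-(η/2) * x) :=
    Real.exp_le_exp.mpr (by nlinarith)
  have hF0' : 0 ≤ β*(Real.exp (-(η/2)))^2 - Real.exp (-(η/2))
      + (1-2*β)*Real.log (Real.exp (-(η/2))) + (1 - β) := by
    rw [Real.log_exp]; exact hF0
  have happ := F_nonneg hβ1 hβ2 h0 h01 hv hF0'
  rw [Real.log_exp] at happ
  have hv2 : Real.exp (-(η/2) * x)^2 = Real.exp (-η * x) := by
    rw [sq, ← Real.exp_add]; congr 1; ring
  rw [hv2] at happ
  nlinarith [happ]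

lemma S1cond {η : ℝ} (h0 : 0 < η) (h1 : η ≤ 1) :
    0 ≤ (0.32:ℝ)*(Real.exp (-(η/2)))^2 - Real.exp (-(η/2)) + (1-2*0.32)*(-(η/2)) + (1 - 0.32) := by
  have hsq : Real.exp ((1:ℝ)/2) * Real.exp ((1:ℝ)/2) = Real.exp 1 := by
    rw [← Real.exp_add]; norm_num
  have hub : Real.exp ((1:ℝ)/2) ≤ 16/9 := by
    nlinarith [Real.exp_pos ((1:ℝ)/2), Real.exp_one_lt_d9]
  have h916 : (9/16 : ℝ) ≤ Real.exp (-(1/2) : ℝ) := by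
    rw [Real.exp_neg, le_inv_comm₀ (by norm_num) (Real.exp_pos _)]
    calc Real.exp ((1:ℝ)/2) ≤ 16/9 := hub
      _ = ((9:ℝ)/16)⁻¹ := by norm_num
  have hv916 : (9/16 : ℝ) ≤ Real.exp (-(η/2)) := by
    apply le_trans h916 (Real.exp_le_exp.mpr (by linarith))
  have happ := Fmid (β := 0.32) (v := Real.exp (-(η/2))) (by norm_num)
    (Real.exp_pos _) (by rw [← Real.exp_zero]; exact Real.exp_le_exp.mpr (by linarith))
    (by norm_num; linarith)
  rw [Real.log_exp] at happ
  exact happ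

lemma S2cond {η : ℝ} (h1 : 1 < η) :
    0 ≤ (1/2 - 0.21/η)*(Real.exp (-(η/2)))^2 - Real.exp (-(η/2))
      + (1-2*(1/2 - 0.21/η))*(-(η/2)) + (1 - (1/2 - 0.21/η)) := by
  have hηpos : (0:ℝ) < η := lt_trans one_pos h1
  have hP := P_nonneg h1.le
  have hv2 : (Real.exp (-(η/2)))^2 = Real.exp (-η) := by
    rw [sq, ← Real.exp_add]; congr 1; ring
  rw [hv2]
  have e : (1/2 - 0.21/η)*Real.exp (-η) - Real.exp (-(η/2))
      + (1-2*(1/2 - 0.21/η))*(-(η/2)) + (1 - (1/2 - 0.21/η))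
      = (0.58*η + 0.42 + (η-0.42)*Real.exp (-η) - 2*η*Real.exp (-(η/2))) / (2*η) := by
    field_simp
    ring
  rw [e]
  apply div_nonneg (by linarith) (by linarith)

/-- **Stochastic mixability concentration.**
Let `Z` take values in `[-1, 1]` a.s. with `E[Z] = a/n` for `a > 0`, and suppose
`E[exp(-η Z)] = 1` for some `η > 0`.  If `a/n < (exp η + exp(-η) - 2)/(exp η - exp(-η))`
then `E[exp(-(η/2) Z)] ≤ 1 - 0.18 η a / n` when `η ≤ 1`, and
`E[exp(-(η/2) Z)] ≤ 1 - 0.21 a / n` when `η > 1`; in particular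
`E[exp(-(η/2) Z)] ≤ 1 - 0.18 min(η,1) a / n`. -/
theorem stochastic_mixability_concentration
    {Ω : Type*} [MeasurableSpace Ω] (μ : Measure Ω) [IsProbabilityMeasure μ]
    (Z : Ω → ℝ) (hZmeas : Measurable Z)
    (hZbdd : ∀ᵐ ω ∂μ, Z ω ∈ Set.Icc (-1 : ℝ) 1)
    (n : ℕ) (hn : 0 < n) (a : ℝ) (ha : 0 < a)
    (hmean : ∫ ω, Z ω ∂μ = a / n)
    (η : ℝ) (hη : 0 < η)
    (hcgf : ∫ ω, Real.exp (-η * Z ω) ∂μ = 1)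
    (hint : a / n < (Real.exp η + Real.exp (-η) - 2) / (Real.exp η - Real.exp (-η))) :
    (η ≤ 1 → ∫ ω, Real.exp (-(η / 2) * Z ω) ∂μ ≤ 1 - 0.18 * η * a / n)
    ∧ (1 < η → ∫ ω, Real.exp (-(η / 2) * Z ω) ∂μ ≤ 1 - 0.21 * a / n)
    ∧ ∫ ω, Real.exp (-(η / 2) * Z ω) ∂μ ≤ 1 - 0.18 * min η 1 * a / n := by
  have hn' : (0:ℝ) < (n:ℝ) := by exact_mod_cast hn
  have hm0 : 0 ≤ a / (n:ℝ) := le_of_lt (div_pos ha hn')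
  -- integrability facts
  have hZae : ∀ᵐ ω ∂μ, ‖Z ω‖ ≤ 1 := by
    filter_upwards [hZbdd] with ω h
    rw [Real.norm_eq_abs]
    exact abs_le.mpr ⟨h.1, h.2⟩
  have hZint : Integrable Z μ :=
    (integrable_const (1:ℝ)).mono' hZmeas.aestronglyMeasurable hZae
  have hexpint : ∀ c : ℝ, Integrable (fun ω => Real.exp (c * Z ω)) μ := by
    intro c
    apply (integrable_const (Real.exp |c|)).mono'
      ((measurable_const.mul hZmeas).exp.aestronglyMeasurable)
    filter_upwards [hZbdd] with ω h
    rw [Real.norm_eq_abs, Real.abs_exp]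
    apply Real.exp_le_exp.mpr
    calc c * Z ω ≤ |c * Z ω| := le_abs_self _
      _ = |c| * |Z ω| := abs_mul _ _
      _ ≤ |c| * 1 := by
          apply mul_le_mul_of_nonneg_left _ (abs_nonneg c)
          exact abs_le.mpr ⟨h.1, h.2⟩
      _ = |c| := mul_one _
  -- main parametric bound
  have main : ∀ β : ℝ, 1/4 ≤ β → β ≤ 1/2 →
      0 ≤ β*(Real.exp (-(η/2)))^2 - Real.exp (-(η/2)) + (1-2*β)*(-(η/2)) + (1 - β) →
      ∫ ω, Real.exp (-(η / 2) * Z ω) ∂μ ≤ 1 - (η*(1/2-β))*(a/n) := by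
    intro β hβ1 hβ2 hF0
    have hpt : ∀ᵐ ω ∂μ, Real.exp (-(η/2) * Z ω)
        ≤ (1-β) + β * Real.exp (-η * Z ω) - (η*(1/2-β))*(Z ω) := by
      filter_upwards [hZbdd] with ω h
      exact pointwise_bound hη h.2 hβ1 hβ2 hF0
    have hint1 : Integrable (fun ω => (1-β) + β * Real.exp (-η * Z ω)) μ :=
      (integrable_const _).add ((hexpint (-η)).const_mul β)
    have hint2 : Integrable (fun ω => (1-β) + β * Real.exp (-η * Z ω)
        - (η*(1/2-β))*(Z ω)) μ := hint1.sub (hZint.const_mul _)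
    have hmono := integral_mono_ae (hexpint (-(η/2))) hint2 hpt
    have ecomp : ∫ ω, ((1-β) + β * Real.exp (-η * Z ω) - (η*(1/2-β))*(Z ω)) ∂μ
        = 1 - (η*(1/2-β))*(a/n) := by
      rw [integral_sub hint1 (hZint.const_mul _),
        integral_add (integrable_const _) ((hexpint (-η)).const_mul β),
        integral_const, integral_const_mul, integral_const_mul, hcgf, hmean]
      simp
    rw [ecomp] at hmono
    exact hmono
  have part1 : η ≤ 1 → ∫ ω, Real.exp (-(η / 2) * Z ω) ∂μ ≤ 1 - 0.18 * η * a / n := by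
    intro hle
    have h := main 0.32 (by norm_num) (by norm_num) (S1cond hη hle)
    calc ∫ ω, Real.exp (-(η / 2) * Z ω) ∂μ ≤ 1 - (η*(1/2-0.32))*(a/n) := h
      _ = 1 - 0.18 * η * a / n := by ring
  have part2 : 1 < η → ∫ ω, Real.exp (-(η / 2) * Z ω) ∂μ ≤ 1 - 0.21 * a / n := by
    intro hgt
    have hηpos : (0:ℝ) < η := lt_trans one_pos hgt
    have hβ1 : 1/4 ≤ 1/2 - 0.21/η := by
      have : 0.21/η ≤ 0.21 := by
        rw [div_le_iff₀ hηpos]; nlinarith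
      linarith
    have hβ2 : 1/2 - 0.21/η ≤ 1/2 := by
      have : 0 ≤ 0.21/η := by positivity
      linarith
    have h := main (1/2 - 0.21/η) hβ1 hβ2 (S2cond hgt)
    have e : η*(1/2-(1/2 - 0.21/η)) = 0.21 := by
      field_simp
      ring
    calc ∫ ω, Real.exp (-(η / 2) * Z ω) ∂μ ≤ 1 - (η*(1/2-(1/2 - 0.21/η)))*(a/n) := h
      _ = 1 - 0.21 * a / n := by rw [e]; ring
  refine ⟨part1, part2, ?_⟩
  rcases le_or_gt η 1 with h | h
  · rw [min_eq_left h]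
    exact part1 h
  · rw [min_eq_right h.le]
    calc ∫ ω, Real.exp (-(η / 2) * Z ω) ∂μ ≤ 1 - 0.21 * a / n := part2 h
      _ ≤ 1 - 0.18 * 1 * a / n := by
          rw [sub_le_sub_iff_left]
          rw [div_le_div_iff_of_pos_right hn'] -- may fail; fallback below
          nlinarith
end

section
/- Let (ℓ, F, P) be an η*-stochastically mixable statistical learning problem with |F| = N finite, ℓ a nonnegative loss, and ℓ(Y, f(X)) ≤ V almost surely for every f ∈ F, for a constant V. Then for all n ≥ 1 and δ ∈ (0,1), with probability at least 1 - δ over an i.i.d. sample of size n from P, every empirical risk minimizer f̂ satisfies P(ℓ∘f̂) ≤ P(ℓ∘f*) + 6 max{V, 1/η*} (log(1/δ) + log N) / n. -/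
open MeasureTheory Real

set_option maxHeartbeats 1000000

private lemma oracle_key_ptwise {x : ℝ} (hx : |x| ≤ 1) :
    exp (-(x/3)) ≤ 1 + (exp (-x) - 1)/6 - x/6 := by
  have hx2 : -1 ≤ x ∧ x ≤ 1 := abs_le.mp hx
  have h3 : |(-(x/3))| ≤ 1 := by
    rw [abs_neg, abs_div]
    rw [show |(3:ℝ)| = 3 by norm_num, div_le_one (by norm_num)]
    linarith
  have hx' : |(-x)| ≤ 1 := by rwa [abs_neg]
  have hb1 := Real.exp_bound h3 (n := 5) (by norm_num)
  have hb2 := Real.exp_bound hx' (n := 5) (by norm_num)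
  have h5 : |x| ^ 5 ≤ |x| ^ 4 := pow_le_pow_of_le_one (abs_nonneg x) hx (by norm_num)
  have h4 : |x| ^ 4 = x ^ 4 := by rw [← abs_pow]; exact abs_of_nonneg (by positivity)
  have ha1 : |x/3| ^ 5 ≤ x^4 / 243 := by
    rw [abs_div, show |(3:ℝ)| = 3 by norm_num, div_pow]
    rw [div_le_div_iff₀ (by positivity) (by norm_num)]
    nlinarith [abs_nonneg x]
  have ha2 : |x| ^ 5 ≤ x ^ 4 := by linarith
  rw [Finset.sum_range_succ, Finset.sum_range_succ, Finset.sum_range_succ,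
    Finset.sum_range_succ, Finset.sum_range_one] at hb1 hb2
  simp only [abs_neg] at hb1 hb2
  norm_num [Nat.factorial] at hb1 hb2
  rw [abs_le] at hb1 hb2
  have hx3 : x ^ 3 ≤ x ^ 2 := by nlinarith [sq_nonneg x]
  have hx4 : (0:ℝ) ≤ x ^ 4 := by positivity
  nlinarith [hb1.1, hb1.2, hb2.1, hb2.2, sq_nonneg x]

private lemma oracle_exp_convex_interp {a θ : ℝ} (h0 : 0 ≤ θ) (h1 : θ ≤ 1) :
    exp (θ * a) ≤ θ * exp a + (1 - θ) := by
  have := convexOn_exp.2 (Set.mem_univ a) (Set.mem_univ 0) h0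
    (by linarith : (0:ℝ) ≤ 1 - θ) (by ring)
  simpa using this

private lemma oracle_integrable_exp_of_bdd {α : Type*} [MeasurableSpace α] (μ : Measure α)
    [IsProbabilityMeasure μ] {W : α → ℝ} (hW : Measurable W) {V : ℝ}
    (hb : ∀ᵐ z ∂μ, |W z| ≤ V) (c : ℝ) :
    Integrable (fun z => exp (c * W z)) μ := by
  refine Integrable.mono' (integrable_const (exp (|c| * V)))
    ((hW.const_mul c).exp.aestronglyMeasurable) ?_
  filter_upwards [hb] with z hz
  rw [Real.norm_eq_abs, abs_of_nonneg (exp_pos _).le]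
  apply exp_le_exp.mpr
  calc c * W z ≤ |c * W z| := le_abs_self _
  _ = |c| * |W z| := abs_mul _ _
  _ ≤ |c| * V := by
      have : (0:ℝ) ≤ |c| := abs_nonneg c
      have hV : 0 ≤ V := le_trans (abs_nonneg _) hz
      nlinarith [hz]

private lemma oracle_moment_bound {α : Type*} [MeasurableSpace α] (μ : Measure α)
    [IsProbabilityMeasure μ]
    {W : α → ℝ} (hW : Measurable W) {V ηs : ℝ} (hV : 0 < V) (hηs : 0 < ηs)
    (hb : ∀ᵐ z ∂μ, |W z| ≤ V)
    (hmix : ∫ z, exp (-ηs * W z) ∂μ ≤ 1) :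
    ∫ z, exp (-(min ηs (1/V)/3) * W z) ∂μ ≤ exp (-(min ηs (1/V)/6) * ∫ z, W z ∂μ) := by
  set η := min ηs (1/V) with hηdef
  have hη0 : 0 < η := lt_min hηs (by positivity)
  have hηle : η ≤ ηs := min_le_left _ _
  have hηV : η * V ≤ 1 := by
    have h2 : η ≤ 1/V := min_le_right _ _
    calc η * V ≤ (1/V) * V := by nlinarith
    _ = 1 := by field_simp
  have hWint : Integrable W μ := by
    refine Integrable.mono' (integrable_const V) hW.aestronglyMeasurable ?_
    filter_upwards [hb] with z hz using by rwa [Real.norm_eq_abs]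
  have hIs := oracle_integrable_exp_of_bdd μ hW hb (-ηs)
  have hIη := oracle_integrable_exp_of_bdd μ hW hb (-η)
  have hIη3 := oracle_integrable_exp_of_bdd μ hW hb (-(η/3))
  have step1 : ∫ z, exp (-η * W z) ∂μ ≤ 1 := by
    set θ := η / ηs with hθdef
    have hθ0 : 0 ≤ θ := by positivity
    have hθ1 : θ ≤ 1 := by rw [div_le_one hηs]; exact hηle
    have hpt : ∀ z, exp (-η * W z) ≤ θ * exp (-ηs * W z) + (1 - θ) := by
      intro z
      have := oracle_exp_convex_interp (a := -ηs * W z) hθ0 hθ1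
      have he : θ * (-ηs * W z) = -η * W z := by
        have hθη : θ * ηs = η := by rw [hθdef]; field_simp
        linear_combination (-W z) * hθη
      rwa [he] at this
    calc ∫ z, exp (-η * W z) ∂μ
        ≤ ∫ z, (θ * exp (-ηs * W z) + (1 - θ)) ∂μ := by
          refine integral_mono hIη ?_ hpt
          exact (hIs.const_mul θ).add (integrable_const _)
      _ = θ * ∫ z, exp (-ηs * W z) ∂μ + (1 - θ) := by
          rw [integral_add (hIs.const_mul θ) (integrable_const _), integral_const_mul,
            integral_const, probReal_univ]
          simp
      _ ≤ θ * 1 + (1 - θ) := by nlinarith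
      _ = 1 := by ring
  have step2 : ∀ᵐ z ∂μ, exp (-(η/3) * W z) ≤ 5/6 + (1/6) * exp (-η * W z) - (η/6) * W z := by
    filter_upwards [hb] with z hz
    have hxb : |η * W z| ≤ 1 := by
      rw [abs_mul, abs_of_nonneg hη0.le]
      nlinarith [abs_nonneg (W z)]
    have hk := oracle_key_ptwise hxb
    rw [show -(η/3) * W z = -(η * W z/3) by ring, show -η * W z = -(η * W z) by ring]
    linarith
  have hRHSint : Integrable (fun z => 5/6 + (1/6) * exp (-η * W z) - (η/6) * W z) μ :=
    ((integrable_const _).add (hIη.const_mul _)).sub (hWint.const_mul _)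
  have step3 : ∫ z, exp (-(η/3) * W z) ∂μ
      ≤ 5/6 + (1/6) * ∫ z, exp (-η * W z) ∂μ - (η/6) * ∫ z, W z ∂μ := by
    calc ∫ z, exp (-(η/3) * W z) ∂μ
        ≤ ∫ z, (5/6 + (1/6) * exp (-η * W z) - (η/6) * W z) ∂μ :=
          integral_mono_ae hIη3 hRHSint step2
      _ = 5/6 + (1/6) * ∫ z, exp (-η * W z) ∂μ - (η/6) * ∫ z, W z ∂μ := by
          have h1 : Integrable (fun z => 5/6 + 1/6 * exp (-η * W z)) μ := by
            exact (integrable_const _).add (hIη.const_mul _)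
          have h2 : Integrable (fun z => η/6 * W z) μ := hWint.const_mul _
          rw [integral_sub h1 h2, integral_add (integrable_const _) (hIη.const_mul _),
            integral_const, probReal_univ, integral_const_mul, integral_const_mul]
          simp
  have final : 5/6 + (1/6) * ∫ z, exp (-η * W z) ∂μ - (η/6) * ∫ z, W z ∂μ
      ≤ exp (-(η/6) * ∫ z, W z ∂μ) := by
    have := Real.add_one_le_exp (-(η/6) * ∫ z, W z ∂μ)
    nlinarith
  linarith

private lemma oracle_chernoff_pi {α : Type*} [MeasurableSpace α] (P : Measure α)
    [IsProbabilityMeasure P]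
    {W : α → ℝ} (hW : Measurable W) {γ : ℝ} (hγ : 0 ≤ γ)
    (hint : Integrable (fun z => exp (-γ * W z)) P) (n : ℕ) :
    (Measure.pi fun _ : Fin n => P) {ω : Fin n → α | ∑ j, W (ω j) ≤ 0}
      ≤ ENNReal.ofReal ((∫ z, exp (-γ * W z) ∂P) ^ n) := by
  letI : MeasureSpace α := ⟨P⟩
  haveI : IsProbabilityMeasure (volume : Measure α) := ‹IsProbabilityMeasure P›
  have hvol : (Measure.pi fun _ : Fin n => P) = (volume : Measure (Fin n → α)) := rfl
  set g : α → ℝ := fun z => exp (-γ * W z) with hg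
  have hgmeas : Measurable g := by fun_prop
  have hGmeas : Measurable (fun ω : Fin n → α => ∏ j, g (ω j)) :=
    Finset.measurable_prod _ fun j _ => hgmeas.comp (measurable_pi_apply j)
  haveI : SigmaFinite (volume : Measure α) := IsFiniteMeasure.toSigmaFinite _
  have hGint : Integrable (fun ω : Fin n → α => ∏ j, g (ω j)) := by
    exact Integrable.fintype_prod (f := fun _ : Fin n => g) fun i => hint
  have hsub : {ω : Fin n → α | ∑ j, W (ω j) ≤ 0}
      ⊆ {ω : Fin n → α | 1 ≤ ENNReal.ofReal (∏ j, g (ω j))} := by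
    intro ω hω
    simp only [Set.mem_setOf_eq] at hω ⊢
    rw [ENNReal.one_le_ofReal]
    have h1 : ∏ j, g (ω j) = exp (∑ j, -γ * W (ω j)) := by
      rw [Real.exp_sum]
    rw [h1, ← Real.exp_zero]
    apply Real.exp_le_exp.mpr
    have h2 : ∑ j, -γ * W (ω j) = -γ * ∑ j, W (ω j) := by rw [Finset.mul_sum]
    rw [h2]
    nlinarith
  calc (Measure.pi fun _ : Fin n => P) {ω : Fin n → α | ∑ j, W (ω j) ≤ 0}
      ≤ (Measure.pi fun _ : Fin n => P) {ω : Fin n → α | 1 ≤ ENNReal.ofReal (∏ j, g (ω j))} :=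
        measure_mono hsub
    _ ≤ ∫⁻ ω, ENNReal.ofReal (∏ j, g (ω j)) ∂(Measure.pi fun _ : Fin n => P) := by
        have := mul_meas_ge_le_lintegral₀
          (μ := Measure.pi fun _ : Fin n => P)
          (f := fun ω : Fin n → α => ENNReal.ofReal (∏ j, g (ω j)))
          ((ENNReal.measurable_ofReal.comp hGmeas).aemeasurable) 1
        simpa using this
    _ = ENNReal.ofReal (∫ ω, ∏ j, g (ω j) ∂(Measure.pi fun _ : Fin n => P)) := by
        rw [hvol]
        rw [← ofReal_integral_eq_lintegral_ofReal hGint]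
        filter_upwards with ω
        exact Finset.prod_nonneg fun j _ => (exp_pos _).le
    _ = ENNReal.ofReal ((∫ z, g z ∂P) ^ n) := by
        rw [hvol]
        have h3 := integral_fintype_prod_eq_pow (ι := Fin n) (𝕜 := ℝ) (E := α) (μ := P) g
        rw [← hvol, h3, Fintype.card_fin]

/-- **Finite classes exact oracle inequality.**
Let `(ℓ, F, P)` be `η*`-stochastically mixable with `F` finite of cardinality `N`,
`ℓ` a nonnegative loss bounded by `V` a.s. on `F`.  Then for all `n ≥ 1`, with
probability at least `1 - δ` over an i.i.d. `n`-sample from `P`, every empirical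
risk minimizer `f̂` satisfies
`P(ℓ∘f̂) ≤ P(ℓ∘f*) + 6 max{V, 1/η*} (log(1/δ) + log N) / n`. -/
theorem finite_class_exact_oracle_inequality
    {X Y : Type*} [MeasurableSpace X] [MeasurableSpace Y]
    (P : Measure (X × Y)) [IsProbabilityMeasure P]
    (ℓ : Y → ℝ → ℝ) (F : Finset (X → ℝ)) (hF : F.Nonempty)
    (hmeas : ∀ f ∈ F, Measurable fun z : X × Y => ℓ z.2 (f z.1))
    (hnonneg : ∀ f ∈ F, ∀ z : X × Y, 0 ≤ ℓ z.2 (f z.1))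
    (V : ℝ) (hbdd : ∀ f ∈ F, ∀ᵐ z ∂P, ℓ z.2 (f z.1) ≤ V)
    (fStar : X → ℝ) (hfStarMem : fStar ∈ F)
    (hfStarMin : ∀ f ∈ F, ∫ z, ℓ z.2 (fStar z.1) ∂P ≤ ∫ z, ℓ z.2 (f z.1) ∂P)
    (ηStar : ℝ) (hηStar : 0 < ηStar)
    (hmix : ∀ f ∈ F,
      Real.log (∫ z, Real.exp (-ηStar * (ℓ z.2 (f z.1) - ℓ z.2 (fStar z.1))) ∂P) ≤ 0)
    (hlargest : ∀ η : ℝ, 0 < η →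
      (∀ f ∈ F,
        Real.log (∫ z, Real.exp (-η * (ℓ z.2 (f z.1) - ℓ z.2 (fStar z.1))) ∂P) ≤ 0) →
      η ≤ ηStar)
    (n : ℕ) (hn : 1 ≤ n) (δ : ℝ) (hδ : δ ∈ Set.Ioo (0 : ℝ) 1) :
    ENNReal.ofReal (1 - δ) ≤
      (Measure.pi fun _ : Fin n => P)
        {ω : Fin n → X × Y | ∀ f ∈ F,
          (∀ g ∈ F, (1 / n : ℝ) * ∑ j, ℓ (ω j).2 (f (ω j).1)
              ≤ (1 / n : ℝ) * ∑ j, ℓ (ω j).2 (g (ω j).1)) →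
          ∫ z, ℓ z.2 (f z.1) ∂P ≤ (∫ z, ℓ z.2 (fStar z.1) ∂P)
            + 6 * max V (1 / ηStar) * (Real.log (1 / δ) + Real.log F.card) / n} := by
  classical
  obtain ⟨hδ0, hδ1⟩ := hδ
  have hN1 : 1 ≤ F.card := Finset.card_pos.mpr hF
  have hNR : (1:ℝ) ≤ (F.card : ℝ) := by exact_mod_cast hN1
  have hn0 : (0:ℝ) < (n:ℝ) := by exact_mod_cast Nat.lt_of_lt_of_le Nat.zero_lt_one hn
  have hlog1δ : 0 < Real.log (1/δ) := Real.log_pos (one_lt_one_div hδ0 hδ1)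
  have hlogN : 0 ≤ Real.log (F.card : ℝ) := Real.log_nonneg hNR
  have hmaxpos : 0 < max V (1/ηStar) := lt_of_lt_of_le (by positivity) (le_max_right _ _)
  have hε0 : 0 ≤ 6 * max V (1/ηStar) * (Real.log (1/δ) + Real.log (F.card : ℝ)) / n := by
    apply div_nonneg _ hn0.le
    apply mul_nonneg (by nlinarith) (by linarith)
  -- integrability of the losses
  have hint : ∀ f ∈ F, Integrable (fun z => ℓ z.2 (f z.1)) P := by
    intro f hf
    refine Integrable.mono' (integrable_const V) (hmeas f hf).aestronglyMeasurable ?_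
    filter_upwards [hbdd f hf] with z hz
    rw [Real.norm_eq_abs, abs_of_nonneg (hnonneg f hf z)]
    exact hz
  rcases le_or_gt V 0 with hV | hV
  · -- degenerate case : losses vanish a.e.
    have hzero : ∀ f ∈ F, ∫ z, ℓ z.2 (f z.1) ∂P = 0 := by
      intro f hf
      have hae : (fun z => ℓ z.2 (f z.1)) =ᵐ[P] (fun _ => (0:ℝ)) := by
        filter_upwards [hbdd f hf] with z hz
        exact le_antisymm (hz.trans hV) (hnonneg f hf z)
      rw [integral_congr_ae hae, integral_const, smul_eq_mul, mul_zero]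
    have hsetuniv : {ω : Fin n → X × Y | ∀ f ∈ F,
          (∀ g ∈ F, (1 / n : ℝ) * ∑ j, ℓ (ω j).2 (f (ω j).1)
              ≤ (1 / n : ℝ) * ∑ j, ℓ (ω j).2 (g (ω j).1)) →
          ∫ z, ℓ z.2 (f z.1) ∂P ≤ (∫ z, ℓ z.2 (fStar z.1) ∂P)
            + 6 * max V (1 / ηStar) * (Real.log (1 / δ) + Real.log F.card) / n} = Set.univ := by
      ext ω
      simp only [Set.mem_setOf_eq, Set.mem_univ, iff_true]
      intro f hf _
      rw [hzero f hf, hzero fStar hfStarMem]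
      linarith
    rw [hsetuniv, measure_univ]
    exact ENNReal.ofReal_le_one.mpr (by linarith)
  · -- main case : V > 0
    set η := min ηStar (1/V) with hηdef
    have hη0 : 0 < η := lt_min hηStar (by positivity)
    have hmaxV : max V (1/ηStar) = 1/η := by
      rcases le_total ηStar (1/V) with h | h
      · rw [hηdef, min_eq_left h, max_eq_right]
        rw [le_div_iff₀ hηStar]
        rw [le_div_iff₀ hV] at h
        nlinarith
      · rw [hηdef, min_eq_right h, one_div_one_div, max_eq_left]
        rw [div_le_iff₀ hV] at h
        rw [div_le_iff₀ hηStar]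
        nlinarith
    have hWmeas : ∀ f ∈ F, Measurable (fun z : X × Y => ℓ z.2 (f z.1) - ℓ z.2 (fStar z.1)) :=
      fun f hf => (hmeas f hf).sub (hmeas fStar hfStarMem)
    have hWbdd : ∀ f ∈ F, ∀ᵐ z ∂P, |ℓ z.2 (f z.1) - ℓ z.2 (fStar z.1)| ≤ V := by
      intro f hf
      filter_upwards [hbdd f hf, hbdd fStar hfStarMem] with z h1 h2
      rw [abs_le]
      constructor
      · nlinarith [hnonneg f hf z, hnonneg fStar hfStarMem z]
      · nlinarith [hnonneg f hf z, hnonneg fStar hfStarMem z]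
    have hmix' : ∀ f ∈ F,
        ∫ z, exp (-ηStar * (ℓ z.2 (f z.1) - ℓ z.2 (fStar z.1))) ∂P ≤ 1 := by
      intro f hf
      have hIs := oracle_integrable_exp_of_bdd P (hWmeas f hf) (hWbdd f hf) (-ηStar)
      have hlb : ∀ᵐ z ∂P, exp (-ηStar * V)
          ≤ exp (-ηStar * (ℓ z.2 (f z.1) - ℓ z.2 (fStar z.1))) := by
        filter_upwards [hWbdd f hf] with z hz
        apply exp_le_exp.mpr
        rw [abs_le] at hz
        nlinarith
      have hpos : 0 < ∫ z, exp (-ηStar * (ℓ z.2 (f z.1) - ℓ z.2 (fStar z.1))) ∂P := by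
        have hmono := integral_mono_ae (integrable_const (exp (-ηStar*V))) hIs hlb
        rw [integral_const, probReal_univ] at hmono
        simp only [ENNReal.toReal_one, one_smul, smul_eq_mul, one_mul] at hmono
        exact lt_of_lt_of_le (exp_pos _) hmono
      calc ∫ z, exp (-ηStar * (ℓ z.2 (f z.1) - ℓ z.2 (fStar z.1))) ∂P
          = exp (Real.log (∫ z, exp (-ηStar * (ℓ z.2 (f z.1) - ℓ z.2 (fStar z.1))) ∂P)) :=
            (Real.exp_log hpos).symm
        _ ≤ exp 0 := exp_le_exp.mpr (hmix f hf)
        _ = 1 := Real.exp_zero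
    set bad : Finset (X → ℝ) := F.filter (fun f =>
      (∫ z, ℓ z.2 (fStar z.1) ∂P)
        + 6 * max V (1/ηStar) * (Real.log (1/δ) + Real.log F.card) / n
        < ∫ z, ℓ z.2 (f z.1) ∂P) with hbaddef
    have hAbound : ∀ f ∈ bad, (Measure.pi fun _ : Fin n => P)
        {ω : Fin n → X × Y |
          ∑ j, (ℓ (ω j).2 (f (ω j).1) - ℓ (ω j).2 (fStar (ω j).1)) ≤ 0}
          ≤ ENNReal.ofReal (δ / F.card) := by
      intro f hfbad
      obtain ⟨hfF, hflt⟩ := Finset.mem_filter.mp hfbad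
      have hmom := oracle_moment_bound P (hWmeas f hfF) hV hηStar (hWbdd f hfF) (hmix' f hfF)
      have hch := oracle_chernoff_pi P (hWmeas f hfF) (γ := η/3) (by positivity)
        (oracle_integrable_exp_of_bdd P (hWmeas f hfF) (hWbdd f hfF) (-(η/3))) n
      refine le_trans hch (ENNReal.ofReal_le_ofReal ?_)
      have hWI : ∫ z, (ℓ z.2 (f z.1) - ℓ z.2 (fStar z.1)) ∂P
          = (∫ z, ℓ z.2 (f z.1) ∂P) - ∫ z, ℓ z.2 (fStar z.1) ∂P :=
        integral_sub (hint f hfF) (hint fStar hfStarMem)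
      rw [← hηdef, hWI] at hmom
      have hq0 : 0 ≤ ∫ z, exp (-(η/3) * (ℓ z.2 (f z.1) - ℓ z.2 (fStar z.1))) ∂P :=
        integral_nonneg fun z => (exp_pos _).le
      have hNpos : (0:ℝ) < (F.card : ℝ) := by linarith
      have hEgt : 6 * max V (1/ηStar) * (Real.log (1/δ) + Real.log (F.card:ℝ)) / n
          < (∫ z, ℓ z.2 (f z.1) ∂P) - ∫ z, ℓ z.2 (fStar z.1) ∂P := by linarith
      calc (∫ z, exp (-(η/3) * (ℓ z.2 (f z.1) - ℓ z.2 (fStar z.1))) ∂P) ^ n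
          ≤ (exp (-(η/6) * ((∫ z, ℓ z.2 (f z.1) ∂P) - ∫ z, ℓ z.2 (fStar z.1) ∂P))) ^ n :=
            pow_le_pow_left₀ hq0 hmom n
        _ = exp ((n:ℝ) * (-(η/6) * ((∫ z, ℓ z.2 (f z.1) ∂P) - ∫ z, ℓ z.2 (fStar z.1) ∂P))) :=
            (Real.exp_nat_mul _ n).symm
        _ ≤ δ / F.card := by
            rw [show (δ / (F.card:ℝ)) = exp (Real.log (δ / F.card)) from
              (Real.exp_log (by positivity)).symm]
            apply exp_le_exp.mpr
            rw [Real.log_div (ne_of_gt hδ0) (ne_of_gt hNpos)]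
            have hld : Real.log (1/δ) = - Real.log δ := by
              rw [one_div, Real.log_inv]
            have hkey : (n:ℝ) * (η/6)
                * (6 * max V (1/ηStar) * (Real.log (1/δ) + Real.log (F.card:ℝ)) / n)
                = Real.log (1/δ) + Real.log (F.card:ℝ) := by
              rw [hmaxV]
              field_simp
            nlinarith [mul_pos (mul_pos hn0 (by positivity : (0:ℝ) < η/6))
              (sub_pos.mpr hEgt)]
    have hAmeas : ∀ f ∈ bad, MeasurableSet
        {ω : Fin n → X × Y |
          ∑ j, (ℓ (ω j).2 (f (ω j).1) - ℓ (ω j).2 (fStar (ω j).1)) ≤ 0} := by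
      intro f hfbad
      obtain ⟨hfF, -⟩ := Finset.mem_filter.mp hfbad
      have hm : Measurable fun ω : Fin n → X × Y =>
          ∑ j, (ℓ (ω j).2 (f (ω j).1) - ℓ (ω j).2 (fStar (ω j).1)) :=
        Finset.measurable_sum _ fun j _ => (hWmeas f hfF).comp (measurable_pi_apply j)
      exact measurableSet_le hm measurable_const
    have hUmeas : MeasurableSet (⋃ f ∈ bad, {ω : Fin n → X × Y |
        ∑ j, (ℓ (ω j).2 (f (ω j).1) - ℓ (ω j).2 (fStar (ω j).1)) ≤ 0}) :=
      Finset.measurableSet_biUnion _ hAmeas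
    have hUbound : (Measure.pi fun _ : Fin n => P) (⋃ f ∈ bad, {ω : Fin n → X × Y |
        ∑ j, (ℓ (ω j).2 (f (ω j).1) - ℓ (ω j).2 (fStar (ω j).1)) ≤ 0})
        ≤ ENNReal.ofReal δ := by
      have hNne : ((F.card : ℝ)) ≠ 0 := by positivity
      calc (Measure.pi fun _ : Fin n => P) (⋃ f ∈ bad, {ω : Fin n → X × Y |
            ∑ j, (ℓ (ω j).2 (f (ω j).1) - ℓ (ω j).2 (fStar (ω j).1)) ≤ 0})
          ≤ ∑ f ∈ bad, (Measure.pi fun _ : Fin n => P) {ω : Fin n → X × Y |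
            ∑ j, (ℓ (ω j).2 (f (ω j).1) - ℓ (ω j).2 (fStar (ω j).1)) ≤ 0} :=
            measure_biUnion_finset_le _ _
        _ ≤ ∑ f ∈ bad, ENNReal.ofReal (δ / F.card) := Finset.sum_le_sum hAbound
        _ = (bad.card : ENNReal) * ENNReal.ofReal (δ / F.card) := by
            rw [Finset.sum_const, nsmul_eq_mul]
        _ ≤ (F.card : ENNReal) * ENNReal.ofReal (δ / F.card) := by
            gcongr
            exact Finset.filter_subset _ _
        _ = ENNReal.ofReal ((F.card : ℝ) * (δ / F.card)) := by
            rw [ENNReal.ofReal_mul (Nat.cast_nonneg _), ENNReal.ofReal_natCast]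
        _ = ENNReal.ofReal δ := by
            congr 1
            field_simp
    have hsub2 : (⋃ f ∈ bad, {ω : Fin n → X × Y |
        ∑ j, (ℓ (ω j).2 (f (ω j).1) - ℓ (ω j).2 (fStar (ω j).1)) ≤ 0})ᶜ
        ⊆ {ω : Fin n → X × Y | ∀ f ∈ F,
          (∀ g ∈ F, (1 / n : ℝ) * ∑ j, ℓ (ω j).2 (f (ω j).1)
              ≤ (1 / n : ℝ) * ∑ j, ℓ (ω j).2 (g (ω j).1)) →
          ∫ z, ℓ z.2 (f z.1) ∂P ≤ (∫ z, ℓ z.2 (fStar z.1) ∂P)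
            + 6 * max V (1 / ηStar) * (Real.log (1 / δ) + Real.log F.card) / n} := by
      intro ω hω
      simp only [Set.mem_compl_iff, Set.mem_iUnion, Set.mem_setOf_eq, not_exists,
        not_le] at hω
      intro f hf hERM
      by_contra hcon
      push_neg at hcon
      have hfbad : f ∈ bad := Finset.mem_filter.mpr ⟨hf, hcon⟩
      have h1 := hERM fStar hfStarMem
      have h2 : ∑ j, ℓ (ω j).2 (f (ω j).1) ≤ ∑ j, ℓ (ω j).2 (fStar (ω j).1) := by
        have hpos : (0:ℝ) < 1/(n:ℝ) := by positivity
        exact le_of_mul_le_mul_left h1 hpos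
      have h3 : ∑ j, (ℓ (ω j).2 (f (ω j).1) - ℓ (ω j).2 (fStar (ω j).1)) ≤ 0 := by
        rw [Finset.sum_sub_distrib]
        linarith
      exact absurd h3 (not_le.mpr (hω f hfbad))
    calc ENNReal.ofReal (1 - δ)
        = 1 - ENNReal.ofReal δ := by
          rw [ENNReal.ofReal_sub 1 hδ0.le, ENNReal.ofReal_one]
      _ ≤ 1 - (Measure.pi fun _ : Fin n => P) (⋃ f ∈ bad, {ω : Fin n → X × Y |
            ∑ j, (ℓ (ω j).2 (f (ω j).1) - ℓ (ω j).2 (fStar (ω j).1)) ≤ 0}) :=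
          tsub_le_tsub_left hUbound 1
      _ = (Measure.pi fun _ : Fin n => P) Set.univ
          - (Measure.pi fun _ : Fin n => P) (⋃ f ∈ bad, {ω : Fin n → X × Y |
            ∑ j, (ℓ (ω j).2 (f (ω j).1) - ℓ (ω j).2 (fStar (ω j).1)) ≤ 0}) := by
          rw [measure_univ]
      _ = (Measure.pi fun _ : Fin n => P) ((⋃ f ∈ bad, {ω : Fin n → X × Y |
            ∑ j, (ℓ (ω j).2 (f (ω j).1) - ℓ (ω j).2 (fStar (ω j).1)) ≤ 0})ᶜ) :=
          (measure_compl hUmeas (measure_ne_top _ _)).symm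
      _ ≤ _ := measure_mono hsub2
end

section
/- Let (ℓ, F, P) be a statistical learning problem with losses ℓ(Y, f(X)) bounded in [0, V] almost surely for all f ∈ F, let f* ∈ F be a risk minimizer, and for ε > 0 set G_ε := {f*} ∪ {f ∈ F : ‖f - f*‖_{L₁(P)} ≥ ε}. Assume G_ε \ {f*} is compact in the L₁(P) topology and the map f ↦ P(ℓ∘f) is continuous on F with respect to the L₁(P) pseudometric. If there exists ε > 0 such that (ℓ, G_ε, P) is not η-stochastically mixable for any η > 0, then there exists g* ∈ F with ‖g* - f*‖_{L₁(P)} ≥ ε and P(ℓ∘g*) = P(ℓ∘f*); that is, the risk minimizer over F is not unique. -/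
open MeasureTheory Real


lemma exp_le_quad {t : ℝ} (h : |t| ≤ 1) : Real.exp t ≤ 1 + t + (3/4) * t^2 := by
  have H := Real.exp_bound h (by norm_num : 0 < 2)
  have h2 : (∑ i ∈ Finset.range 2, t ^ i / i.factorial) = 1 + t := by
    simp [Finset.sum_range_succ]
  rw [h2] at H
  norm_num [Nat.factorial] at H
  have := abs_le.mp H |>.2
  nlinarith [sq_abs t, sq_nonneg t]

lemma gap_lemma {α : Type*} [MeasurableSpace α] (μ : Measure α) [IsProbabilityMeasure μ]
    (Z : α → ℝ) (hZm : Measurable Z) (V η : ℝ) (hV : 0 ≤ V) (hη : 0 < η)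
    (hηV : η * V ≤ 1) (hZb : ∀ᵐ a ∂μ, |Z a| ≤ V)
    (hpos : 0 < Real.log (∫ a, Real.exp (-η * Z a) ∂μ)) :
    ∫ a, Z a ∂μ ≤ η * V ^ 2 := by
  have hZint : Integrable Z μ := by
    refine Integrable.mono' (integrable_const V) hZm.aestronglyMeasurable ?_
    filter_upwards [hZb] with a ha using ha
  have hIint : Integrable (fun a => 1 - η * Z a + (3/4) * (η * V)^2) μ :=
    (integrable_const 1).sub (hZint.const_mul η) |>.add (integrable_const _)
  have hEint : Integrable (fun a => Real.exp (-η * Z a)) μ := by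
    refine Integrable.mono' (integrable_const (Real.exp (η * V)))
      ((Real.measurable_exp.comp (hZm.const_mul (-η))).aestronglyMeasurable) ?_
    filter_upwards [hZb] with a ha
    rw [Real.norm_eq_abs, abs_of_pos (Real.exp_pos _), Real.exp_le_exp]
    nlinarith [abs_le.mp ha]
  have hmono : ∫ a, Real.exp (-η * Z a) ∂μ ≤ ∫ a, (1 - η * Z a + (3/4) * (η * V)^2) ∂μ := by
    refine integral_mono_ae hEint hIint ?_
    filter_upwards [hZb] with a ha
    have h1 : |(-η) * Z a| ≤ 1 := by
      rw [abs_mul, abs_neg, abs_of_pos hη]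
      nlinarith [abs_le.mp ha, abs_nonneg (Z a)]
    have := exp_le_quad h1
    have hsq : ((-η) * Z a)^2 ≤ (η * V)^2 := by
      rw [mul_pow, mul_pow, neg_pow]
      have : (Z a)^2 ≤ V^2 := by nlinarith [abs_le.mp ha, abs_nonneg (Z a)]
      nlinarith [sq_nonneg η]
    nlinarith
  have hI1 : 1 < ∫ a, Real.exp (-η * Z a) ∂μ := by
    by_contra h
    push_neg at h
    have h0 : 0 ≤ ∫ a, Real.exp (-η * Z a) ∂μ :=
      integral_nonneg fun a => (Real.exp_pos _).le
    exact absurd (Real.log_nonpos h0 h) (not_le.mpr hpos)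
  have heval : ∫ a, (1 - η * Z a + (3/4) * (η * V)^2) ∂μ
      = 1 - η * ∫ a, Z a ∂μ + (3/4) * (η * V)^2 := by
    rw [integral_add (show Integrable (fun a => 1 - η * Z a) μ from
        (integrable_const (1:ℝ)).sub (hZint.const_mul η)) (integrable_const _),
      integral_sub (integrable_const (1:ℝ)) (hZint.const_mul η), integral_const, integral_const,
      integral_const_mul]
    simp
  rw [heval] at hmono
  nlinarith [hI1.trans_le hmono, sq_nonneg η, sq_nonneg V]


/-- **Non-unique minimizers.**
Let `(ℓ, F, P)` have losses bounded in `[0, V]` a.s., risk minimizer `f* ∈ F`,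
and for `ε > 0` let `G_ε = {f*} ∪ {f ∈ F : ‖f - f*‖_{L₁(P)} ≥ ε}`.  Assume
`G_ε \ {f*}` is (sequentially) compact in the `L₁(P)` pseudometric and the risk
is `L₁(P)`-continuous on `F`.  If `(ℓ, G_ε, P)` is not `η`-stochastically mixable
for any `η > 0`, then there is `g* ∈ F` with `‖g* - f*‖_{L₁(P)} ≥ ε` and
`P(ℓ∘g*) = P(ℓ∘f*)`: the risk minimizer over `F` is not unique. -/
theorem non_unique_minimizers
    {X Y : Type*} [MeasurableSpace X] [MeasurableSpace Y]
    (P : Measure (X × Y)) [IsProbabilityMeasure P]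
    (ℓ : Y → ℝ → ℝ) (F : Set (X → ℝ))
    (hmeas : ∀ f ∈ F, Measurable fun z : X × Y => ℓ z.2 (f z.1))
    (V : ℝ) (hbdd : ∀ f ∈ F, ∀ᵐ z ∂P, ℓ z.2 (f z.1) ∈ Set.Icc 0 V)
    (fStar : X → ℝ) (hfStarMem : fStar ∈ F)
    (hfStarMin : ∀ f ∈ F, ∫ z, ℓ z.2 (fStar z.1) ∂P ≤ ∫ z, ℓ z.2 (f z.1) ∂P)
    (ε : ℝ) (hε : 0 < ε)
    -- sequential compactness of `G_ε \ {f*}` in the `L₁(P)` pseudometric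
    (hcompact : ∀ u : ℕ → (X → ℝ),
      (∀ k, u k ∈ F ∧ ε ≤ ∫ z, |u k z.1 - fStar z.1| ∂P) →
      ∃ g, (g ∈ F ∧ ε ≤ ∫ z, |g z.1 - fStar z.1| ∂P) ∧
        ∃ φ : ℕ → ℕ, StrictMono φ ∧
          Filter.Tendsto (fun k => ∫ z, |u (φ k) z.1 - g z.1| ∂P)
            Filter.atTop (nhds 0))
    -- continuity of the risk on `F` w.r.t. the `L₁(P)` pseudometric
    (hcont : ∀ f ∈ F, ∀ c > 0, ∃ d > 0, ∀ g ∈ F,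
      (∫ z, |f z.1 - g z.1| ∂P) < d →
      |(∫ z, ℓ z.2 (g z.1) ∂P) - ∫ z, ℓ z.2 (f z.1) ∂P| < c)
    -- `(ℓ, G_ε, P)` is not `η`-stochastically mixable for any `η > 0`
    (hnotmix : ∀ η > 0, ∃ f,
      (f = fStar ∨ (f ∈ F ∧ ε ≤ ∫ z, |f z.1 - fStar z.1| ∂P)) ∧
      0 < Real.log (∫ z, Real.exp (-η * (ℓ z.2 (f z.1) - ℓ z.2 (fStar z.1))) ∂P)) :
    ∃ g ∈ F, ε ≤ (∫ z, |g z.1 - fStar z.1| ∂P) ∧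
      (∫ z, ℓ z.2 (g z.1) ∂P) = ∫ z, ℓ z.2 (fStar z.1) ∂P := by
  -- V is nonnegative
  have hV : 0 ≤ V := by
    obtain ⟨z, hz⟩ := (hbdd fStar hfStarMem).exists
    exact hz.1.trans hz.2
  have hV1 : (0:ℝ) < V + 1 := by linarith
  -- integrability of losses
  have hint : ∀ f ∈ F, Integrable (fun z => ℓ z.2 (f z.1)) P := by
    intro f hf
    refine Integrable.mono' (integrable_const V) (hmeas f hf).aestronglyMeasurable ?_
    filter_upwards [hbdd f hf] with z hz
    rw [Real.norm_eq_abs, abs_of_nonneg hz.1]; exact hz.2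
  -- the key sequence
  have key : ∀ n : ℕ, ∃ f, (f ∈ F ∧ ε ≤ ∫ z, |f z.1 - fStar z.1| ∂P) ∧
      (∫ z, ℓ z.2 (f z.1) ∂P) - (∫ z, ℓ z.2 (fStar z.1) ∂P)
        ≤ (1/((n+1)*(V+1))) * V^2 := by
    intro n
    set η : ℝ := 1/((n+1)*(V+1)) with hηdef
    have hn1 : (0:ℝ) < (n:ℝ) + 1 := by positivity
    have hηpos : 0 < η := by positivity
    obtain ⟨f, hfG, hpos⟩ := hnotmix η hηpos
    have hfF : f ∈ F ∧ ε ≤ ∫ z, |f z.1 - fStar z.1| ∂P := by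
      rcases hfG with rfl | h
      · exfalso; simp at hpos
      · exact h
    refine ⟨f, hfF, ?_⟩
    have hηV : η * V ≤ 1 := by
      rw [hηdef, div_mul_eq_mul_div, one_mul, div_le_one (by positivity)]
      nlinarith
    have hZm : Measurable (fun z : X × Y => ℓ z.2 (f z.1) - ℓ z.2 (fStar z.1)) :=
      (hmeas f hfF.1).sub (hmeas fStar hfStarMem)
    have hZb : ∀ᵐ z ∂P, |ℓ z.2 (f z.1) - ℓ z.2 (fStar z.1)| ≤ V := by
      filter_upwards [hbdd f hfF.1, hbdd fStar hfStarMem] with z h1 h2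
      rw [abs_le]
      constructor <;> [linarith [h1.1, h2.2]; linarith [h1.2, h2.1]]
    have := gap_lemma P _ hZm V η hV hηpos hηV hZb hpos
    rwa [integral_sub (hint f hfF.1) (hint fStar hfStarMem)] at this
  choose u hu hgap using key
  obtain ⟨g, hg, φ, hφ, htend⟩ := hcompact u hu
  refine ⟨g, hg.1, hg.2, ?_⟩
  by_contra hne
  have hgap0 : 0 < (∫ z, ℓ z.2 (g z.1) ∂P) - ∫ z, ℓ z.2 (fStar z.1) ∂P := by
    have := hfStarMin g hg.1
    cases lt_or_eq_of_le this with
    | inl h => linarith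
    | inr h => exact absurd h.symm hne
  set c : ℝ := (∫ z, ℓ z.2 (g z.1) ∂P) - ∫ z, ℓ z.2 (fStar z.1) ∂P with hc
  obtain ⟨d, hd, hdprop⟩ := hcont g hg.1 (c/2) (by linarith)
  -- find k with both: L1 distance < d and gap small
  have hev : ∀ᶠ k in Filter.atTop, (∫ z, |u (φ k) z.1 - g z.1| ∂P) < d := by
    have := htend.eventually (eventually_lt_nhds hd)  -- maybe wrong name
    exact this
  obtain ⟨N, hN⟩ := hev.exists_forall_of_atTop
  obtain ⟨k0, hk0⟩ := exists_nat_gt (2*V^2/(c*(V+1)))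
  set k := max N k0 with hk
  have hdist : (∫ z, |u (φ k) z.1 - g z.1| ∂P) < d := hN k (le_max_left _ _)
  have hclose : |(∫ z, ℓ z.2 (u (φ k) z.1) ∂P) - ∫ z, ℓ z.2 (g z.1) ∂P| < c/2 := by
    have := hdprop (u (φ k)) (hu (φ k)).1 (by
      have : (∫ z, |g z.1 - u (φ k) z.1| ∂P) = ∫ z, |u (φ k) z.1 - g z.1| ∂P := by
        congr 1; funext z; rw [abs_sub_comm]
      rw [this]; exact hdist)
    exact this
  have hA : (2*V^2/(c*(V+1))) < (φ k : ℝ) + 1 := by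
    have h1 : (k0 : ℝ) ≤ (φ k : ℝ) := by
      exact_mod_cast (le_max_right N k0).trans (hφ.le_apply)
    linarith
  have hgapk : (1/(((φ k:ℝ)+1)*(V+1))) * V^2 < c/2 := by
    have hApos : (0:ℝ) < (φ k : ℝ) + 1 := by positivity
    rw [div_lt_iff₀ (by positivity)] at hA
    rw [div_mul_eq_mul_div, one_mul, div_lt_iff₀ (by positivity)]
    nlinarith
  have hgap2 := hgap (φ k)
  have hmin := hfStarMin (u (φ k)) (hu (φ k)).1
  have habs := abs_lt.mp hclose
  push_cast at hgap2
  linarith [hgap2.trans_lt hgapk]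
end

section
/- Let Z be a random variable with law P supported on [-V, V] such that E[Z] = m > 0 and lim_{η→∞} E[exp(-η Z)] < 1. Then for every ε > 0 and every η₀ > 0, there exists a probability measure Q on [-V, V] × [-V, V] such that: the first marginal of Q equals P; the second coordinate is at most the first coordinate Q-almost surely; the mean of the second coordinate under Q lies within ε of m; and there exists a finite η ≥ η₀ such that the second coordinate Z' satisfies E_Q[exp(-η Z')] = 1. -/
open MeasureTheory Real

/-- **Hyper-concentrated excess losses can be modified.**
Let `P` be the law of a random variable `Z` supported on `[-V, V]` with mean
`m > 0` and `lim_{η→∞} E[exp(-η Z)] < 1`.  Then for every `ε > 0` and `η₀ > 0`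
there is a coupling `Q` on `[-V,V]²` whose first marginal is `P`, whose second
coordinate `Z'` satisfies `Z' ≤ Z` a.s., whose mean is within `ε` of `m`, and
such that `E_Q[exp(-η Z')] = 1` for some finite `η ≥ η₀`. -/
theorem hyper_concentrated_modification
    (V : ℝ) (hV : 0 < V)
    (P : Measure ℝ) [IsProbabilityMeasure P]
    (hsupp : P (Set.Icc (-V) V)ᶜ = 0)
    (m : ℝ) (hm : 0 < m) (hmean : ∫ x, x ∂P = m)
    (hhyper : ∃ L < (1 : ℝ), Filter.Tendsto
      (fun η : ℝ => ∫ x, Real.exp (-η * x) ∂P) Filter.atTop (nhds L))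
    (ε : ℝ) (hε : 0 < ε) (η₀ : ℝ) (hη₀ : 0 < η₀) :
    ∃ Q : Measure (ℝ × ℝ), IsProbabilityMeasure Q ∧
      Q ((Set.Icc (-V) V ×ˢ Set.Icc (-V) V) : Set (ℝ × ℝ))ᶜ = 0 ∧
      Q.map Prod.fst = P ∧
      (∀ᵐ p ∂Q, p.2 ≤ p.1) ∧
      |(∫ p, p.2 ∂Q) - m| ≤ ε ∧
      ∃ η ≥ η₀, (∫ p, Real.exp (-η * p.2) ∂Q) = 1 := by
  have hmV : 0 < m + V := by linarith
  have haeIcc : ∀ᵐ x ∂P, x ∈ Set.Icc (-V) V := by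
    rw [ae_iff]
    exact hsupp
  obtain ⟨L, hL1, htend⟩ := hhyper
  set G : ℝ → ℝ := fun η => ∫ x, Real.exp (-η * x) ∂P with hGdef
  have hGnonneg : ∀ η, 0 ≤ G η := fun η => integral_nonneg fun x => (Real.exp_pos _).le
  have hLL' : L < (1 + L) / 2 := by linarith
  have hL'1 : (1 + L) / 2 < 1 := by linarith
  have h1L' : 0 < 1 - (1 + L) / 2 := by linarith
  set L' : ℝ := (1 + L) / 2 with hL'def
  -- pick η₁ ≥ η₀ with G η₁ < L'
  have hev : ∀ᶠ η in Filter.atTop, G η < L' := htend.eventually_lt_const hLL'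
  obtain ⟨η₁, hGη₁, hη₁0⟩ := (hev.and (Filter.eventually_ge_atTop η₀)).exists
  have hη₁pos : 0 < η₁ := lt_of_lt_of_le hη₀ hη₁0
  -- pick the mixing weight p
  set p := min (min (ε / (m + V)) ((1 - L') / (2 * Real.exp (η₁ * V)))) (1 / 2) with hpdef
  have hp0 : 0 < p := by
    apply lt_min (lt_min (by positivity) (by positivity)) (by norm_num)
  have hp_half : p ≤ 1 / 2 := min_le_right _ _
  have hp1 : p ≤ 1 := by linarith
  have hpε : p ≤ ε / (m + V) := le_trans (min_le_left _ _) (min_le_left _ _)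
  have hpL : p ≤ (1 - L') / (2 * Real.exp (η₁ * V)) :=
    le_trans (min_le_left _ _) (min_le_right _ _)
  -- the coupling
  have hg₁ : Measurable (fun x : ℝ => (x, x)) := measurable_id.prodMk measurable_id
  have hg₂ : Measurable (fun x : ℝ => (x, -V)) := measurable_id.prodMk measurable_const
  set μ₁ : Measure (ℝ × ℝ) := P.map (fun x => (x, x)) with hμ₁def
  set μ₂ : Measure (ℝ × ℝ) := P.map (fun x => (x, -V)) with hμ₂def
  set Q : Measure (ℝ × ℝ) := ENNReal.ofReal (1 - p) • μ₁ + ENNReal.ofReal p • μ₂ with hQdef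
  -- integral formula under Q
  have hQint : ∀ f : ℝ × ℝ → ℝ, Measurable f → Integrable (fun x => f (x, x)) P →
      Integrable (fun x => f (x, -V)) P →
      ∫ q, f q ∂Q = (1 - p) * ∫ x, f (x, x) ∂P + p * ∫ x, f (x, -V) ∂P := by
    intro f hf h1 h2
    have hf1 : AEStronglyMeasurable f μ₁ := hf.aestronglyMeasurable
    have hf2 : AEStronglyMeasurable f μ₂ := hf.aestronglyMeasurable
    have i1 : Integrable f μ₁ := (integrable_map_measure hf1 hg₁.aemeasurable).mpr h1
    have i2 : Integrable f μ₂ := (integrable_map_measure hf2 hg₂.aemeasurable).mpr h2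
    rw [hQdef, integral_add_measure (i1.smul_measure ENNReal.ofReal_ne_top)
        (i2.smul_measure ENNReal.ofReal_ne_top),
      integral_smul_measure, integral_smul_measure,
      hμ₁def, hμ₂def,
      integral_map hg₁.aemeasurable hf.aestronglyMeasurable,
      integral_map hg₂.aemeasurable hf.aestronglyMeasurable,
      ENNReal.toReal_ofReal (by linarith), ENNReal.toReal_ofReal hp0.le,
      smul_eq_mul, smul_eq_mul]
  -- integrability facts
  have hid : Integrable (fun x : ℝ => x) P := by
    refine (integrable_const V).mono' measurable_id.aestronglyMeasurable
      (haeIcc.mono fun x hx => ?_)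
    rw [Real.norm_eq_abs]
    exact abs_le.mpr ⟨hx.1, hx.2⟩
  have hexp : ∀ η : ℝ, Integrable (fun x => Real.exp (-η * x)) P := by
    intro η
    refine (integrable_const (Real.exp (|η| * V))).mono'
      ((measurable_id.const_mul (-η)).exp).aestronglyMeasurable
      (haeIcc.mono fun x hx => ?_)
    rw [Real.norm_eq_abs, Real.abs_exp]
    apply Real.exp_le_exp.mpr
    calc -η * x ≤ |(-η) * x| := le_abs_self _
      _ = |η| * |x| := by rw [abs_mul, abs_neg]
      _ ≤ |η| * V := mul_le_mul_of_nonneg_left (abs_le.mpr ⟨hx.1, hx.2⟩) (abs_nonneg _)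
  -- the exp integral under Q
  have hgform : ∀ η : ℝ, ∫ q, Real.exp (-η * q.2) ∂Q
      = (1 - p) * G η + p * Real.exp (η * V) := by
    intro η
    have hc : Integrable (fun x : ℝ => Real.exp (-η * ((x, -V) : ℝ × ℝ).2)) P :=
      integrable_const (Real.exp (-η * -V))
    have hc2 : ∫ x : ℝ, Real.exp (-η * ((x, -V) : ℝ × ℝ).2) ∂P = Real.exp (η * V) := by
      simp [neg_mul_neg]
    rw [hQint (fun q => Real.exp (-η * q.2)) ((measurable_snd.const_mul (-η)).exp)
      (hexp η) hc, hc2]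
  -- the mean under Q
  have hmean2 : ∫ q, q.2 ∂Q = (1 - p) * m + p * (-V) := by
    have := hQint (fun q => q.2) measurable_snd hid (integrable_const _)
    simpa [hmean] using this
  -- marginal
  have hmarg : Q.map Prod.fst = P := by
    have hc1 : (Prod.fst ∘ fun x : ℝ => (x, x)) = id := rfl
    have hc2 : (Prod.fst ∘ fun x : ℝ => (x, -V)) = id := rfl
    rw [hQdef, Measure.map_add _ _ measurable_fst, Measure.map_smul, Measure.map_smul,
      hμ₁def, hμ₂def, Measure.map_map measurable_fst hg₁, Measure.map_map measurable_fst hg₂,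
      hc1, hc2, Measure.map_id, ← add_smul,
      ← ENNReal.ofReal_add (by linarith) hp0.le, sub_add_cancel]
    simp
  -- Q is a probability measure
  have hQprob : IsProbabilityMeasure Q := by
    constructor
    rw [hQdef, Measure.add_apply, Measure.smul_apply, Measure.smul_apply, hμ₁def, hμ₂def,
      Measure.map_apply hg₁ MeasurableSet.univ, Measure.map_apply hg₂ MeasurableSet.univ]
    simp only [Set.preimage_univ, measure_univ, smul_eq_mul, mul_one]
    rw [← ENNReal.ofReal_add (by linarith) hp0.le, sub_add_cancel, ENNReal.ofReal_one]
  -- support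
  have hQsupp : Q ((Set.Icc (-V) V ×ˢ Set.Icc (-V) V) : Set (ℝ × ℝ))ᶜ = 0 := by
    have hS : MeasurableSet ((Set.Icc (-V) V ×ˢ Set.Icc (-V) V) : Set (ℝ × ℝ))ᶜ :=
      ((measurableSet_Icc).prod (measurableSet_Icc)).compl
    rw [hQdef, Measure.add_apply, Measure.smul_apply, Measure.smul_apply, hμ₁def, hμ₂def,
      Measure.map_apply hg₁ hS, Measure.map_apply hg₂ hS]
    have e1 : P ((fun x : ℝ => (x, x)) ⁻¹' ((Set.Icc (-V) V ×ˢ Set.Icc (-V) V) : Set (ℝ × ℝ))ᶜ)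
        = 0 := by
      refine measure_mono_null ?_ hsupp
      intro x hx
      simp only [Set.mem_preimage, Set.mem_compl_iff, Set.mem_prod] at hx ⊢
      exact fun h => hx ⟨h, h⟩
    have e2 : P ((fun x : ℝ => (x, -V)) ⁻¹' ((Set.Icc (-V) V ×ˢ Set.Icc (-V) V) : Set (ℝ × ℝ))ᶜ)
        = 0 := by
      refine measure_mono_null ?_ hsupp
      intro x hx
      simp only [Set.mem_preimage, Set.mem_compl_iff, Set.mem_prod] at hx ⊢
      exact fun h => hx ⟨h, Set.mem_Icc.mpr ⟨le_refl _, by linarith⟩⟩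
    rw [e1, e2]
    simp
  -- a.s. domination
  have hae2 : ∀ᵐ q ∂Q, q.2 ≤ q.1 := by
    rw [ae_iff]
    have hS : MeasurableSet {q : ℝ × ℝ | ¬ q.2 ≤ q.1} := by
      simp only [not_le]
      exact measurableSet_lt measurable_fst measurable_snd
    rw [hQdef, Measure.add_apply, Measure.smul_apply, Measure.smul_apply, hμ₁def, hμ₂def,
      Measure.map_apply hg₁ hS, Measure.map_apply hg₂ hS]
    have e1 : ((fun x : ℝ => (x, x)) ⁻¹' {q : ℝ × ℝ | ¬ q.2 ≤ q.1}) = ∅ := by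
      ext x; simp
    have e2 : P ((fun x : ℝ => (x, -V)) ⁻¹' {q : ℝ × ℝ | ¬ q.2 ≤ q.1}) = 0 := by
      refine measure_mono_null ?_ hsupp
      intro x hx
      simp only [Set.mem_preimage, Set.mem_setOf_eq, not_le] at hx
      simp only [Set.mem_compl_iff, Set.mem_Icc, not_and, not_le]
      intro h
      linarith
    rw [e1, e2]
    simp
  -- continuity of G
  have hGcont : Continuous G := by
    rw [continuous_iff_continuousAt]
    intro η₂
    apply continuousAt_of_dominated (bound := fun _ : ℝ => Real.exp ((|η₂| + 1) * V))
    · exact Filter.Eventually.of_forall fun η =>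
        ((measurable_id.const_mul (-η)).exp).aestronglyMeasurable
    · have hball : ∀ᶠ η in nhds η₂, |η - η₂| < 1 := by
        have hcont : Filter.Tendsto (fun η : ℝ => |η - η₂|) (nhds η₂) (nhds |η₂ - η₂|) :=
          ((continuous_id.sub continuous_const).abs).continuousAt
        exact hcont.eventually_lt_const (by simp)
      filter_upwards [hball] with η hη
      filter_upwards [haeIcc] with x hx
      rw [Real.norm_eq_abs, Real.abs_exp]
      apply Real.exp_le_exp.mpr
      have hηb : |η| ≤ |η₂| + 1 := by
        calc |η| = |η₂ + (η - η₂)| := by ring_nf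
          _ ≤ |η₂| + |η - η₂| := abs_add_le _ _
          _ ≤ |η₂| + 1 := by linarith
      calc -η * x ≤ |(-η) * x| := le_abs_self _
        _ = |η| * |x| := by rw [abs_mul, abs_neg]
        _ ≤ (|η₂| + 1) * V :=
          mul_le_mul hηb (abs_le.mpr ⟨hx.1, hx.2⟩) (abs_nonneg _) (by positivity)
    · exact integrable_const _
    · exact Filter.Eventually.of_forall fun x =>
        ((continuous_neg.mul continuous_const).rexp).continuousAt
  -- the function g
  set g : ℝ → ℝ := fun η => (1 - p) * G η + p * Real.exp (η * V) with hgdef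
  have hgcont : Continuous g :=
    (continuous_const.mul hGcont).add
      (continuous_const.mul ((continuous_id.mul continuous_const).rexp))
  -- g η₁ < 1
  have hgη₁ : g η₁ < 1 := by
    have he := Real.exp_pos (η₁ * V)
    have h1 : (1 - p) * G η₁ ≤ G η₁ := by nlinarith [hGnonneg η₁]
    have hpL' : p * (2 * Real.exp (η₁ * V)) ≤ 1 - L' :=
      (le_div_iff₀ (by positivity)).mp hpL
    have h2 : p * Real.exp (η₁ * V) ≤ (1 - L') / 2 := by nlinarith
    show (1 - p) * G η₁ + p * Real.exp (η₁ * V) < 1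
    linarith
  -- choose M with g M ≥ 1
  set M := max η₁ (Real.log (1 / p) / V) with hMdef
  have hMη₁ : η₁ ≤ M := le_max_left _ _
  have hgM : 1 ≤ g M := by
    have h1 : Real.log (1 / p) ≤ M * V :=
      (div_le_iff₀ hV).mp (le_max_right η₁ (Real.log (1 / p) / V))
    have h2 : 1 / p ≤ Real.exp (M * V) := by
      rw [← Real.exp_log (by positivity : (0:ℝ) < 1 / p)]
      exact Real.exp_le_exp.mpr h1
    have h3 : 1 ≤ p * Real.exp (M * V) := by
      have := mul_le_mul_of_nonneg_left h2 hp0.le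
      rwa [mul_one_div, div_self hp0.ne'] at this
    have h4 : 0 ≤ (1 - p) * G M := mul_nonneg (by linarith) (hGnonneg M)
    show 1 ≤ (1 - p) * G M + p * Real.exp (M * V)
    linarith
  -- IVT
  obtain ⟨η, hηmem, hgη⟩ :=
    intermediate_value_Icc hMη₁ hgcont.continuousOn ⟨hgη₁.le, hgM⟩
  refine ⟨Q, hQprob, hQsupp, hmarg, hae2, ?_, η, le_trans hη₁0 hηmem.1, ?_⟩
  · rw [hmean2]
    have heq : (1 - p) * m + p * (-V) - m = -(p * (m + V)) := by ring
    rw [heq, abs_neg, abs_of_nonneg (by positivity)]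
    exact (le_div_iff₀ hmV).mp hpε
  · rw [hgform η]
    exact hgη
end

section
/- Let Z be a bounded real-valued random variable with E[Z] > 0, and suppose there exists η > 0 with E[exp(-η Z)] > 1. Then there exists η' ∈ (0, η) such that E[exp(-η' Z)] = 1. -/
open MeasureTheory Real

/-- **Intermediate value for the cumulant generating function.**
If `Z` is a bounded random variable with `E[Z] > 0` and `E[exp(-η Z)] > 1` for
some `η > 0`, then there exists `η' ∈ (0, η)` with `E[exp(-η' Z)] = 1`. -/
theorem cgf_intermediate_value
    {Ω : Type*} [MeasurableSpace Ω] (μ : Measure Ω) [IsProbabilityMeasure μ]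
    (Z : Ω → ℝ) (hZmeas : Measurable Z) (hZbdd : ∃ C : ℝ, ∀ᵐ ω ∂μ, |Z ω| ≤ C)
    (hmean : 0 < ∫ ω, Z ω ∂μ)
    (η : ℝ) (hη : 0 < η)
    (hgt : 1 < ∫ ω, Real.exp (-η * Z ω) ∂μ) :
    ∃ η' ∈ Set.Ioo 0 η, (∫ ω, Real.exp (-η' * Z ω) ∂μ) = 1 := by
  obtain ⟨C₀, hC₀⟩ := hZbdd
  set C : ℝ := max C₀ 0 with hCdef
  have hC0 : 0 ≤ C := le_max_right _ _
  have hC : ∀ᵐ ω ∂μ, |Z ω| ≤ C := hC₀.mono fun ω h => h.trans (le_max_left _ _)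
  set f : ℝ → ℝ := fun t => ∫ ω, Real.exp (-t * Z ω) ∂μ with hfdef
  -- measurability of integrands
  have hmeas : ∀ t : ℝ, AEStronglyMeasurable (fun ω => Real.exp (-t * Z ω)) μ :=
    fun t => (Real.measurable_exp.comp ((measurable_const.mul hZmeas))).aestronglyMeasurable
  -- bound on integrands
  have hbound : ∀ t : ℝ, ∀ᵐ ω ∂μ, ‖Real.exp (-t * Z ω)‖ ≤ Real.exp (|t| * C) := by
    intro t
    filter_upwards [hC] with ω hω
    rw [Real.norm_eq_abs, abs_of_pos (Real.exp_pos _)]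
    apply Real.exp_le_exp.2
    calc -t * Z ω ≤ |(-t) * Z ω| := le_abs_self _
      _ = |t| * |Z ω| := by rw [abs_mul, abs_neg]
      _ ≤ |t| * C := mul_le_mul_of_nonneg_left hω (abs_nonneg t)
  have hint : ∀ t : ℝ, Integrable (fun ω => Real.exp (-t * Z ω)) μ := by
    intro t
    exact Integrable.mono' (integrable_const _) (hmeas t) (hbound t)
  -- integrability of Z
  have hZint : Integrable Z μ :=
    Integrable.mono' (integrable_const C) hZmeas.aestronglyMeasurable
      (hC.mono fun ω h => by rwa [Real.norm_eq_abs])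
  -- continuity of f
  have hcont : Continuous f := by
    rw [continuous_iff_continuousAt]
    intro t₀
    apply continuousAt_of_dominated (bound := fun _ => Real.exp ((|t₀| + 1) * C))
      (Filter.Eventually.of_forall fun t => hmeas t)
    · filter_upwards [Metric.ball_mem_nhds t₀ one_pos] with t ht
      filter_upwards [hbound t] with ω hω
      refine hω.trans (Real.exp_le_exp.2 ?_)
      have : |t| ≤ |t₀| + 1 := by
        have h := mem_ball_iff_norm.mp ht
        rw [Real.norm_eq_abs] at h
        calc |t| = |t₀ + (t - t₀)| := by ring_nf
          _ ≤ |t₀| + |t - t₀| := abs_add_le _ _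
          _ ≤ |t₀| + 1 := by linarith
      gcongr
    · exact integrable_const _
    · exact Filter.Eventually.of_forall fun ω =>
        (Real.continuous_exp.comp ((continuous_neg.comp continuous_id).mul continuous_const)).continuousAt
  -- derivative of f at 0
  have hderiv : HasDerivAt f (∫ ω, -Z ω ∂μ) 0 := by
    have := hasDerivAt_integral_of_dominated_loc_of_deriv_le (μ := μ)
      (F := fun t ω => Real.exp (-t * Z ω)) (F' := fun t ω => -Z ω * Real.exp (-t * Z ω))
      (x₀ := 0) (s := Metric.ball 0 1) (bound := fun ω => C * Real.exp C) (Metric.ball_mem_nhds 0 one_pos)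
      (Filter.Eventually.of_forall fun t => hmeas t) (hint 0)
      (((measurable_neg.comp hZmeas).mul
        (Real.measurable_exp.comp (measurable_const.mul hZmeas))).aestronglyMeasurable)
      ?_ (integrable_const _) ?_
    · have key := this.2
      have : (∫ ω, -Z ω * Real.exp (-(0:ℝ) * Z ω) ∂μ) = ∫ ω, -Z ω ∂μ := by
        congr 1; ext ω; simp
      rwa [this] at key
    · filter_upwards [hC] with ω hω
      intro t ht
      rw [Real.norm_eq_abs, abs_mul, abs_neg]
      have ht1 : |t| ≤ 1 := by
        have := mem_ball_iff_norm.mp ht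
        simpa using this.le
      have h1 : Real.exp (-t * Z ω) ≤ Real.exp C := by
        apply Real.exp_le_exp.2
        calc -t * Z ω ≤ |(-t) * Z ω| := le_abs_self _
          _ = |t| * |Z ω| := by rw [abs_mul, abs_neg]
          _ ≤ 1 * C := mul_le_mul ht1 hω (abs_nonneg _) zero_le_one
          _ = C := one_mul C
      calc |Z ω| * |Real.exp (-t * Z ω)| = |Z ω| * Real.exp (-t * Z ω) := by
            rw [abs_of_pos (Real.exp_pos _)]
        _ ≤ C * Real.exp C := by
            apply mul_le_mul hω h1 (Real.exp_pos _).le hC0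
    · apply Filter.Eventually.of_forall
      intro ω t _
      have : HasDerivAt (fun t : ℝ => -t * Z ω) (-Z ω) t := by
        simpa using ((hasDerivAt_id t).neg.mul_const (Z ω))
      simpa [mul_comm] using this.exp
  -- f 0 = 1
  have hf0 : f 0 = 1 := by
    simp [hfdef]
  -- derivative negative
  have hderiv_neg : (∫ ω, -Z ω ∂μ) < 0 := by
    rw [integral_neg]; linarith
  -- find δ ∈ (0, η) with f δ < 1
  obtain ⟨δ, hδ⟩ : ∃ δ, δ ∈ Set.Ioo 0 η ∧ f δ < 1 := by
    have hslope : Filter.Tendsto (slope f 0) (nhdsWithin 0 (Set.Ioi 0))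
        (nhds (∫ ω, -Z ω ∂μ)) := by
      have h := hasDerivWithinAt_iff_tendsto_slope.mp
        (hderiv.hasDerivWithinAt (s := Set.Ioi (0:ℝ)))
      simpa [Set.diff_singleton_eq_self (by simp : (0:ℝ) ∉ Set.Ioi (0:ℝ))] using h
    have h1 : ∀ᶠ t in nhdsWithin 0 (Set.Ioi 0), slope f 0 t < 0 :=
      hslope.eventually_lt_const hderiv_neg
    have h2 : ∀ᶠ t in nhdsWithin 0 (Set.Ioi 0), t < η :=
      (eventually_lt_nhds hη).filter_mono nhdsWithin_le_nhds
    have h3 : ∀ᶠ t in nhdsWithin (0:ℝ) (Set.Ioi 0), t ∈ Set.Ioi (0:ℝ) :=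
      eventually_mem_nhdsWithin
    obtain ⟨t, ht1, ht2, ht3⟩ := (h1.and (h2.and h3)).exists
    refine ⟨t, ⟨ht3, ht2⟩, ?_⟩
    rw [slope_def_field, hf0, sub_zero, div_lt_iff₀ ht3, zero_mul] at ht1
    linarith
  obtain ⟨x, hx, hfx⟩ := intermediate_value_Ioo hδ.1.2.le hcont.continuousOn
    (Set.mem_Ioo.mpr ⟨hδ.2, hgt⟩)
  exact ⟨x, ⟨hδ.1.1.trans hx.1, hx.2⟩, hfx⟩
end

section
/- Let η > 0 and let X be a real random variable taking values in [-1, 1] almost surely with E[exp(η X)] = 1. Then -E[X] ≤ (cosh(η) - 1)/sinh(η). -/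
open MeasureTheory Real

lemma chord_exp (η x : ℝ) (hx : x ∈ Set.Icc (-1 : ℝ) 1) :
    Real.exp (η * x) ≤ Real.cosh η + Real.sinh η * x := by
  obtain ⟨h1, h2⟩ := hx
  have ha : (0:ℝ) ≤ (1 - x) / 2 := by linarith
  have hb : (0:ℝ) ≤ (1 + x) / 2 := by linarith
  have hab : (1 - x) / 2 + (1 + x) / 2 = 1 := by ring
  have := convexOn_exp.2 (Set.mem_univ (-η)) (Set.mem_univ η) ha hb hab
  simp only [smul_eq_mul] at this
  have heq : (1 - x) / 2 * (-η) + (1 + x) / 2 * η = η * x := by ring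
  rw [heq] at this
  rw [Real.cosh_eq, Real.sinh_eq]
  calc Real.exp (η * x) ≤ (1 - x) / 2 * Real.exp (-η) + (1 + x) / 2 * Real.exp η := this
    _ = (Real.exp η + Real.exp (-η)) / 2 + (Real.exp η - Real.exp (-η)) / 2 * x := by ring

/-- **Moment feasibility bound.**
If `X` takes values in `[-1, 1]` almost surely and `E[exp(η X)] = 1` for some
`η > 0`, then `-E[X] ≤ (cosh η - 1) / sinh η`. -/
theorem moment_feasibility_bound
    {Ω : Type*} [MeasurableSpace Ω] (μ : Measure Ω) [IsProbabilityMeasure μ]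
    (X : Ω → ℝ) (hXmeas : Measurable X)
    (hXbdd : ∀ᵐ ω ∂μ, X ω ∈ Set.Icc (-1 : ℝ) 1)
    (η : ℝ) (hη : 0 < η)
    (hmoment : ∫ ω, Real.exp (η * X ω) ∂μ = 1) :
    -(∫ ω, X ω ∂μ) ≤ (Real.cosh η - 1) / Real.sinh η := by
  have hXint : Integrable X μ := by
    refine Integrable.mono' (integrable_const 1) hXmeas.aestronglyMeasurable ?_
    filter_upwards [hXbdd] with ω hω
    rw [Real.norm_eq_abs, abs_le]; exact ⟨hω.1, hω.2⟩
  have hexpint : Integrable (fun ω => Real.exp (η * X ω)) μ := by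
    refine Integrable.mono' (integrable_const (Real.exp η)) ?_ ?_
    · exact (Real.measurable_exp.comp (measurable_const.mul hXmeas)).aestronglyMeasurable
    · filter_upwards [hXbdd] with ω hω
      rw [Real.norm_eq_abs, abs_of_pos (Real.exp_pos _)]
      exact Real.exp_le_exp.2 (by nlinarith [hω.1, hω.2])
  have hgint : Integrable (fun ω => Real.cosh η + Real.sinh η * X ω) μ :=
    (integrable_const _).add (hXint.const_mul _)
  have hle : ∫ ω, Real.exp (η * X ω) ∂μ ≤ ∫ ω, Real.cosh η + Real.sinh η * X ω ∂μ := by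
    refine integral_mono_ae hexpint hgint ?_
    filter_upwards [hXbdd] with ω hω
    exact chord_exp η (X ω) hω
  rw [hmoment, integral_add (integrable_const _) (hXint.const_mul _),
    integral_const, integral_const_mul, probReal_univ, smul_eq_mul,
    one_mul] at hle
  have hs : 0 < Real.sinh η := by
    rw [Real.sinh_eq]
    have := Real.exp_lt_exp.2 (show -η < η by linarith)
    linarith
  rw [le_div_iff₀ hs]
  nlinarith
end
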